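/- Let T = T_{p₁,…,p_ℓ} be an ℓ-dimensional torus CC and let T' be the disjoint union of the torus CCs T_{p¹₁,…,p¹_ℓ} and T_{p²₁,…,p²_ℓ}. If p₁⋯p_ℓ = p¹₁⋯p¹_ℓ + p²₁⋯p²_ℓ and p_j ≥ 3, p¹_j ≥ 3, p²_j ≥ 3 for all j, then for every HOMP model M, M(T) = M(T'), even though the Hasse graph of T is connected while the Hasse graph of T' has exactly two connected components (so their 0-th Betti numbers, 1 versus 2, differ). -/

import Mathlib

/-! Basic framework: combinatorial complexes, natural neighborhood functions,
CC coverings, Hasse graphs, and higher-order message-passing (HOMP) models. -/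

namespace TDL

/-- The raw data of a combinatorial complex over an ambient node type `S`:
a set of cells (finite, nonempty subsets of nodes) and a rank function. -/
structure PreCC (S : Type*) where
  cells : Set (Finset S)
  rk : Finset S → ℕ

/-- A (featureless) combinatorial complex.  The node set is implicitly the set of
elements appearing in cells; every singleton of such a node is a cell of rank `0`,
cells are nonempty, there are finitely many cells, and the rank function is
monotone with respect to inclusion. -/
structure CC (S : Type*) extends PreCC S where
  cells_finite : cells.Finite
  nonempty_of_mem : ∀ x ∈ cells, x.Nonempty
  singleton_mem : ∀ x ∈ cells, ∀ s ∈ x, ({s} : Finset S) ∈ cells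
  rk_singleton : ∀ s : S, ({s} : Finset S) ∈ cells → rk {s} = 0
  rk_mono : ∀ x ∈ cells, ∀ y ∈ cells, x ⊆ y → rk x ≤ rk y

/-- Names of the natural neighborhood functions: `(r₁,r₂)`-adjacency,
coadjacency, incidence and co-incidence. -/
inductive NbhdKind : Type
  | adj (r₁ r₂ : ℕ)
  | coadj (r₁ r₂ : ℕ)
  | inc (r₁ r₂ : ℕ)
  | coinc (r₁ r₂ : ℕ)
  deriving DecidableEq

/-- The two ranks mentioned by a neighborhood kind are bounded by `ℓ`. -/
def NbhdKind.bounded (ℓ : ℕ) : NbhdKind → Prop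
  | .adj r₁ r₂ => r₁ ≤ ℓ ∧ r₂ ≤ ℓ
  | .coadj r₁ r₂ => r₁ ≤ ℓ ∧ r₂ ≤ ℓ
  | .inc r₁ r₂ => r₁ ≤ ℓ ∧ r₂ ≤ ℓ
  | .coinc r₁ r₂ => r₁ ≤ ℓ ∧ r₂ ≤ ℓ

namespace PreCC

variable {S : Type*}

/-- The `r`-skeleton: the set of cells of rank `r`. -/
def skel (X : PreCC S) (r : ℕ) : Set (Finset S) := {x | x ∈ X.cells ∧ X.rk x = r}

/-- The natural neighborhood functions of a complex. -/
def nbhd (X : PreCC S) : NbhdKind → Finset S → Set (Finset S)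
  | .adj r₁ r₂, x => {y | x ∈ X.skel r₁ ∧ y ∈ X.skel r₁ ∧ ∃ z ∈ X.skel r₂, x ⊆ z ∧ y ⊆ z}
  | .coadj r₁ r₂, x => {y | x ∈ X.skel r₁ ∧ y ∈ X.skel r₁ ∧ ∃ z ∈ X.skel r₂, z ⊆ x ∧ z ⊆ y}
  | .inc r₁ r₂, x => {y | x ∈ X.skel r₁ ∧ y ∈ X.skel r₂ ∧ x ⊆ y}
  | .coinc r₁ r₂, x => {y | x ∈ X.skel r₁ ∧ y ∈ X.skel r₂ ∧ y ⊆ x}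

/-- The Hasse graph of a complex: vertices are cells, and `x, y` are joined by an
edge whenever `x ⊆ y` and `rk x = rk y - 1` (or symmetrically). -/
def hasse (X : PreCC S) : SimpleGraph {x : Finset S // x ∈ X.cells} where
  Adj a b := (a.1 ⊆ b.1 ∧ X.rk a.1 + 1 = X.rk b.1) ∨ (b.1 ⊆ a.1 ∧ X.rk b.1 + 1 = X.rk a.1)
  symm := ⟨by
    rintro a b (h | h)
    · exact Or.inr h
    · exact Or.inl h⟩
  loopless := ⟨by rintro a (⟨-, h⟩ | ⟨-, h⟩) <;> omega⟩

end PreCC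

/-- `ρ` is a CC covering of `X` by `Xt`: it maps cells of `Xt` to cells of `X`
surjectively, preserves ranks, and is a local isomorphism with respect to every
natural neighborhood function. -/
structure IsCovering {S' S : Type*} (Xt : PreCC S') (X : PreCC S)
    (ρ : Finset S' → Finset S) : Prop where
  mem : ∀ x' ∈ Xt.cells, ρ x' ∈ X.cells
  surj : ∀ x ∈ X.cells, ∃ x' ∈ Xt.cells, ρ x' = x
  rank : ∀ x' ∈ Xt.cells, X.rk (ρ x') = Xt.rk x'
  locBij : ∀ x' ∈ Xt.cells, ∀ N : NbhdKind, Set.BijOn ρ (Xt.nbhd N x') (X.nbhd N (ρ x'))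

open Classical in
/-- The multiset underlying a finite set (junk value `0` for infinite sets). -/
noncomputable def setMultiset {α : Type*} (s : Set α) : Multiset α :=
  if h : s.Finite then h.toFinset.val else 0

/-- A higher-order message-passing (HOMP) model over a feature space `D`, for
featureless complexes of dimension at most `ℓ`: a number of layers `T`, an initial
constant feature, and, per layer, message functions (per neighborhood function and
rank), permutation-invariant aggregations (functions of multisets), a combination
operator over the family of neighborhood functions with ranks at most `ℓ`,
activations, and a readout defined on multisets. -/
structure HOMP (D : Type*) (ℓ : ℕ) where
  T : ℕ
  init : D
  msg : ℕ → NbhdKind → ℕ → D → D → D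
  agg : ℕ → NbhdKind → Multiset D → D
  comb : ℕ → ({N : NbhdKind // N.bounded ℓ} → D) → D
  act : ℕ → D → D
  readout : Multiset D → D

namespace HOMP

variable {D : Type*} {ℓ : ℕ} {S : Type*}

/-- The cell feature maps computed by a HOMP model on a complex:
`h⁰_x` is the initial constant, and
`h^{t+1}_x = β_t (⊗_N (⊕ {{ m_{t,N,rk x}(h^t_x, h^t_y) : y ∈ N(x) }}))`. -/
noncomputable def feat (M : HOMP D ℓ) (X : PreCC S) : ℕ → Finset S → D
  | 0, _ => M.init
  | t + 1, x =>
      M.act t <| M.comb t fun N =>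
        M.agg t N.1 <|
          (setMultiset (X.nbhd N.1 x)).map fun y =>
            M.msg t N.1 (X.rk x) (M.feat X t x) (M.feat X t y)

/-- The output of a HOMP model: the readout of the multiset of final features. -/
noncomputable def out (M : HOMP D ℓ) (X : PreCC S) : D :=
  M.readout <| (setMultiset X.cells).map fun x => M.feat X M.T x

end HOMP

end TDL

namespace TDL

/-- The cell `s_k` of the `ℓ`-dimensional torus: the set of nodes `s + k'` for
`k' ≤ k`, with coordinatewise addition modulo `p j`. -/
def torusCell {ℓ : ℕ} (p : Fin ℓ → ℕ) (s : ∀ i, ZMod (p i)) (k : Fin ℓ → Bool) :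
    Finset (∀ i, ZMod (p i)) :=
  (Finset.univ.filter fun k' : Fin ℓ → Bool => ∀ i, k' i = true → k i = true).image
    fun k' i => s i + if k' i then 1 else 0

/-- The number of ones in `k ∈ {0,1}^ℓ`, i.e. the rank of the cell `s_k`. -/
def torusRank {ℓ : ℕ} (k : Fin ℓ → Bool) : ℕ :=
  (Finset.univ.filter fun i => k i = true).card

/-- The `ℓ`-dimensional torus combinatorial complex `T_{p₁,…,p_ℓ}`: nodes are
`ℤ/p₁ × ⋯ × ℤ/p_ℓ`, cells are the sets `s_k`, and the rank of `s_k` is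
`k₁ + ⋯ + k_ℓ`. -/
noncomputable def torusPre {ℓ : ℕ} (p : Fin ℓ → ℕ) : PreCC (∀ i, ZMod (p i)) where
  cells := {x | ∃ s k, x = torusCell p s k}
  rk x := sInf {r | ∃ s k, x = torusCell p s k ∧ r = torusRank k}

end TDL

namespace TDL

/-- The disjoint union of two complexes: cells are the images of the cells of the
two summands under the inclusions into the sum type, with inherited ranks. -/
noncomputable def PreCC.disjSum {S S' : Type*} (X : PreCC S) (Y : PreCC S') :
    PreCC (S ⊕ S') where
  cells := ((fun x => x.map Function.Embedding.inl) '' X.cells) ∪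
    ((fun y => y.map Function.Embedding.inr) '' Y.cells)
  rk z := sInf ({r | ∃ x ∈ X.cells, z = x.map Function.Embedding.inl ∧ r = X.rk x} ∪
    {r | ∃ y ∈ Y.cells, z = y.map Function.Embedding.inr ∧ r = Y.rk y})

section TorusBasic
variable {ℓ : ℕ} {p : Fin ℓ → ℕ}

lemma zmod_one_ne_zero {n : ℕ} (hn : 3 ≤ n) : (1 : ZMod n) ≠ 0 := by
  haveI : NeZero n := ⟨by omega⟩
  intro h
  have h1 : ((1 : ℕ) : ZMod n).val = 1 := ZMod.val_cast_of_lt (by omega)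
  rw [Nat.cast_one, h, ZMod.val_zero] at h1
  omega

lemma zmod_two_ne_zero {n : ℕ} (hn : 3 ≤ n) : (2 : ZMod n) ≠ 0 := by
  haveI : NeZero n := ⟨by omega⟩
  intro h
  have h1 : ((2 : ℕ) : ZMod n).val = 2 := ZMod.val_cast_of_lt (by omega)
  rw [Nat.cast_two, h, ZMod.val_zero] at h1
  omega

lemma mem_torusCell_iff {s a : ∀ i, ZMod (p i)} {k : Fin ℓ → Bool} :
    a ∈ torusCell p s k ↔ ∀ i, a i = s i ∨ (k i = true ∧ a i = s i + 1) := by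
  unfold torusCell
  simp only [Finset.mem_image, Finset.mem_filter, Finset.mem_univ, true_and]
  constructor
  · rintro ⟨k', hk', rfl⟩ i
    by_cases h : k' i = true
    · exact Or.inr ⟨hk' i h, by simp [h]⟩
    · left; simp [h]
  · intro h
    refine ⟨fun i => decide (a i ≠ s i), fun i hi => ?_, ?_⟩
    · rw [decide_eq_true_iff] at hi
      rcases h i with h' | ⟨hk, _⟩
      · exact absurd h' hi
      · exact hk
    · funext i
      by_cases h' : a i = s i
      · simp [h']
      · rcases h i with h'' | ⟨_, h2⟩
        · exact absurd h'' h'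
        · have hd : (decide (a i ≠ s i)) = true := by simp [h']
          rw [if_pos hd, h2]

lemma torusCell_nonempty (s : ∀ i, ZMod (p i)) (k : Fin ℓ → Bool) :
    (torusCell p s k).Nonempty :=
  ⟨s, mem_torusCell_iff.2 fun _ => Or.inl rfl⟩

lemma torusCell_subset_iff (hp : ∀ i, 3 ≤ p i) {s s' : ∀ i, ZMod (p i)} {k k' : Fin ℓ → Bool} :
    torusCell p s k ⊆ torusCell p s' k' ↔
      ∀ i, (k i = true → k' i = true ∧ s i = s' i) ∧
        (k i = false → s i = s' i ∨ (k' i = true ∧ s i = s' i + 1)) := by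
  constructor
  · intro hsub i
    have P0 := mem_torusCell_iff.1 (hsub (mem_torusCell_iff.2
      (fun _ => Or.inl rfl : ∀ j, s j = s j ∨ _))) i
    constructor
    · intro hki
      have hmem : Function.update s i (s i + 1) ∈ torusCell p s k := by
        apply mem_torusCell_iff.2
        intro j
        by_cases hj : j = i
        · subst hj; exact Or.inr ⟨hki, by simp⟩
        · exact Or.inl (Function.update_of_ne hj _ _)
      have P1 := mem_torusCell_iff.1 (hsub hmem) i
      rw [Function.update_self] at P1
      rcases P0 with h0 | ⟨hk', h0⟩
      · rcases P1 with h1 | ⟨hk', h1⟩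
        · exfalso
          rw [h0] at h1
          have : s' i + 1 = s' i + 0 := by rw [add_zero]; exact h1
          exact zmod_one_ne_zero (hp i) (add_left_cancel this)
        · exact ⟨hk', h0⟩
      · exfalso
        rcases P1 with h1 | ⟨_, h1⟩
        · rw [h0, add_assoc] at h1
          have : s' i + (1 + 1) = s' i + 0 := by rw [add_zero]; exact h1
          have h2 := add_left_cancel this
          rw [one_add_one_eq_two] at h2
          exact zmod_two_ne_zero (hp i) h2
        · have h2 : s i = s' i := add_right_cancel h1
          rw [h2] at h0
          have : s' i + 1 = s' i + 0 := by rw [add_zero]; exact h0.symm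
          exact zmod_one_ne_zero (hp i) (add_left_cancel this)
    · intro _; exact P0
  · intro h a ha
    apply mem_torusCell_iff.2
    intro i
    rcases mem_torusCell_iff.1 ha i with hai | ⟨hki, hai⟩
    · have : s i = s' i ∨ (k' i = true ∧ s i = s' i + 1) := by
        cases hk : k i
        · exact (h i).2 hk
        · exact Or.inl ((h i).1 hk).2
      rcases this with h' | ⟨hk', h'⟩
      · exact Or.inl (by rw [hai, h'])
      · exact Or.inr ⟨hk', by rw [hai, h']⟩
    · obtain ⟨hk', hss⟩ := (h i).1 hki
      exact Or.inr ⟨hk', by rw [hai, hss]⟩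

lemma torusCell_inj (hp : ∀ i, 3 ≤ p i) {s s' : ∀ i, ZMod (p i)} {k k' : Fin ℓ → Bool}
    (h : torusCell p s k = torusCell p s' k') : s = s' ∧ k = k' := by
  have h1 := (torusCell_subset_iff hp).1 h.le
  have h2 := (torusCell_subset_iff hp).1 h.ge
  have hk : k = k' := by
    funext i
    cases hki : k i
    · cases hki' : k' i
      · rfl
      · exact absurd ((h2 i).1 hki').1 (by simp [hki])
    · exact (((h1 i).1 hki).1).symm
  subst hk
  refine ⟨funext fun i => ?_, rfl⟩
  cases hki : k i
  · rcases (h1 i).2 hki with h' | ⟨hk', h'⟩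
    · exact h'
    · exact absurd hk' (by simp [hki])
  · exact ((h1 i).1 hki).2

lemma rk_torusCell (hp : ∀ i, 3 ≤ p i) (s : ∀ i, ZMod (p i)) (k : Fin ℓ → Bool) :
    (torusPre p).rk (torusCell p s k) = torusRank k := by
  have : {r | ∃ s' k', torusCell p s k = torusCell p s' k' ∧ r = torusRank k'} =
      {torusRank k} := by
    ext r
    simp only [Set.mem_setOf_eq, Set.mem_singleton_iff]
    constructor
    · rintro ⟨s', k', he, rfl⟩
      rw [(torusCell_inj hp he).2]
    · rintro rfl
      exact ⟨s, k, rfl, rfl⟩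
  show sInf _ = _
  rw [this, csInf_singleton]

lemma mem_cells_torus {x : Finset (∀ i, ZMod (p i))} :
    x ∈ (torusPre p).cells ↔ ∃ s k, x = torusCell p s k := Iff.rfl

lemma mem_skel_torus (hp : ∀ i, 3 ≤ p i) {x : Finset (∀ i, ZMod (p i))} {r : ℕ} :
    x ∈ (torusPre p).skel r ↔ ∃ s k, x = torusCell p s k ∧ torusRank k = r := by
  constructor
  · rintro ⟨⟨s, k, rfl⟩, hr⟩
    exact ⟨s, k, rfl, by rw [← rk_torusCell hp s k]; exact hr⟩
  · rintro ⟨s, k, rfl, rfl⟩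
    exact ⟨⟨s, k, rfl⟩, rk_torusCell hp s k⟩

lemma torusRank_le (k : Fin ℓ → Bool) : torusRank k ≤ ℓ := by
  have := Finset.card_filter_le (Finset.univ : Finset (Fin ℓ)) (fun i => k i = true)
  simpa [torusRank] using this

end TorusBasic

section TorusData
variable {ℓ : ℕ} {p : Fin ℓ → ℕ}

/-- Offset codes: `0 ↦ 0`, `1 ↦ +1`, `2 ↦ -1`. -/
def off (n : ℕ) : Fin 3 → ZMod n := ![0, 1, -1]

lemma off_zero (n : ℕ) : off n 0 = 0 := rfl
lemma off_one (n : ℕ) : off n 1 = 1 := rfl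
lemma off_two (n : ℕ) : off n 2 = -1 := rfl

lemma off_inj {n : ℕ} (hn : 3 ≤ n) : Function.Injective (off n) := by
  have h1 := zmod_one_ne_zero hn
  have h2 := zmod_two_ne_zero hn
  have h3 : (1 : ZMod n) ≠ -1 := by
    intro h
    apply h2
    rw [← one_add_one_eq_two]
    exact eq_neg_iff_add_eq_zero.1 h
  have h4 : (-1 : ZMod n) ≠ 0 := fun h => h1 (neg_eq_zero.1 h)
  intro a b hab
  fin_cases a <;> fin_cases b <;> simp_all [off]

/-- `cell (s + off d)ₐ ⊆ cell (s + off e)_b`, valid shape when `e i ∈ {0,2}`. -/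
def SubU (a b : Bool) (d e : Fin 3) : Prop :=
  (a = true → b = true ∧ d = e) ∧
  (a = false → d = e ∨ (b = true ∧ ((e = 0 ∧ d = 1) ∨ (e = 2 ∧ d = 0))))

/-- `cell (s + off d)ₐ ⊆ cell (s + off e)_b`, valid shape when `d i ∈ {0,1}`. -/
def SubD (a b : Bool) (d e : Fin 3) : Prop :=
  (a = true → b = true ∧ d = e) ∧
  (a = false → d = e ∨ (b = true ∧ ((d = 0 ∧ e = 2) ∨ (d = 1 ∧ e = 0))))

lemma off_eq_add_one_U {n : ℕ} (hn : 3 ≤ n) {d e : Fin 3} (he : e = 0 ∨ e = 2) :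
    off n d = off n e + 1 ↔ ((e = 0 ∧ d = 1) ∨ (e = 2 ∧ d = 0)) := by
  rcases he with rfl | rfl
  · rw [off_zero, zero_add]
    constructor
    · intro h
      exact Or.inl ⟨rfl, off_inj hn (by rw [h, off_one])⟩
    · rintro (⟨-, rfl⟩ | ⟨h, -⟩)
      · exact off_one n
      · exact absurd h (by decide)
  · rw [off_two, neg_add_cancel]
    constructor
    · intro h
      exact Or.inr ⟨rfl, off_inj hn (by rw [h, off_zero])⟩
    · rintro (⟨h, -⟩ | ⟨-, rfl⟩)
      · exact absurd h (by decide)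
      · exact off_zero n

lemma off_eq_add_one_D {n : ℕ} (hn : 3 ≤ n) {d e : Fin 3} (hd : d = 0 ∨ d = 1) :
    off n d = off n e + 1 ↔ ((d = 0 ∧ e = 2) ∨ (d = 1 ∧ e = 0)) := by
  rcases hd with rfl | rfl
  · rw [off_zero]
    constructor
    · intro h
      have h' : off n e = -1 := eq_neg_of_add_eq_zero_left h.symm
      exact Or.inl ⟨rfl, off_inj hn (by rw [h', off_two])⟩
    · rintro (⟨-, rfl⟩ | ⟨h, -⟩)
      · rw [off_two, neg_add_cancel]
      · exact absurd h (by decide)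
  · rw [off_one]
    constructor
    · intro h
      have h' : off n e = 0 := right_eq_add.1 h
      exact Or.inr ⟨rfl, off_inj hn (by rw [h', off_zero])⟩
    · rintro (⟨h, -⟩ | ⟨-, rfl⟩)
      · exact absurd h (by decide)
      · rw [off_zero, zero_add]

lemma subset_iff_subU (hp : ∀ i, 3 ≤ p i) {s : ∀ i, ZMod (p i)} {a b : Fin ℓ → Bool}
    {d e : Fin ℓ → Fin 3} (he : ∀ i, e i = 0 ∨ e i = 2) :
    torusCell p (fun i => s i + off (p i) (d i)) a ⊆
      torusCell p (fun i => s i + off (p i) (e i)) b ↔ ∀ i, SubU (a i) (b i) (d i) (e i) := by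
  rw [torusCell_subset_iff hp]
  apply forall_congr'
  intro i
  have k1 : (s i + off (p i) (d i) = s i + off (p i) (e i)) ↔ d i = e i := by
    rw [add_right_inj]; exact (off_inj (hp i)).eq_iff
  have k2 : (s i + off (p i) (d i) = s i + off (p i) (e i) + 1) ↔
      ((e i = 0 ∧ d i = 1) ∨ (e i = 2 ∧ d i = 0)) := by
    rw [add_assoc, add_right_inj]; exact off_eq_add_one_U (hp i) (he i)
  simp only [SubU, k1, k2]

lemma subset_iff_subD (hp : ∀ i, 3 ≤ p i) {s : ∀ i, ZMod (p i)} {a b : Fin ℓ → Bool}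
    {d e : Fin ℓ → Fin 3} (hd : ∀ i, d i = 0 ∨ d i = 1) :
    torusCell p (fun i => s i + off (p i) (d i)) a ⊆
      torusCell p (fun i => s i + off (p i) (e i)) b ↔ ∀ i, SubD (a i) (b i) (d i) (e i) := by
  rw [torusCell_subset_iff hp]
  apply forall_congr'
  intro i
  have k1 : (s i + off (p i) (d i) = s i + off (p i) (e i)) ↔ d i = e i := by
    rw [add_right_inj]; exact (off_inj (hp i)).eq_iff
  have k2 : (s i + off (p i) (d i) = s i + off (p i) (e i) + 1) ↔
      ((d i = 0 ∧ e i = 2) ∨ (d i = 1 ∧ e i = 0)) := by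
    rw [add_assoc, add_right_inj]; exact off_eq_add_one_D (hp i) (hd i)
  simp only [SubD, k1, k2]

lemma subU_base (hp : ∀ i, 3 ≤ p i) {s : ∀ i, ZMod (p i)} {k b : Fin ℓ → Bool}
    {e : Fin ℓ → Fin 3} (he : ∀ i, e i = 0 ∨ e i = 2) :
    torusCell p s k ⊆ torusCell p (fun i => s i + off (p i) (e i)) b ↔
      ∀ i, SubU (k i) (b i) 0 (e i) := by
  have := subset_iff_subU (s := s) hp (a := k) (b := b) (d := fun _ => 0) (e := e) he
  simpa only [off_zero, add_zero] using this

lemma subD_base (hp : ∀ i, 3 ≤ p i) {s : ∀ i, ZMod (p i)} {k b : Fin ℓ → Bool}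
    {d : Fin ℓ → Fin 3} (hd : ∀ i, d i = 0 ∨ d i = 1) :
    torusCell p (fun i => s i + off (p i) (d i)) b ⊆ torusCell p s k ↔
      ∀ i, SubD (b i) (k i) (d i) 0 := by
  have := subset_iff_subD (s := s) hp (a := b) (b := k) (d := d) (e := fun _ => 0) hd
  simpa only [off_zero, add_zero] using this

lemma exists_off_of_supset (hp : ∀ i, 3 ≤ p i) {s s₂ : ∀ i, ZMod (p i)} {k k₂ : Fin ℓ → Bool}
    (h : torusCell p s k ⊆ torusCell p s₂ k₂) :
    ∃ e : Fin ℓ → Fin 3, (∀ i, e i = 0 ∨ e i = 2) ∧ s₂ = fun i => s i + off (p i) (e i) := by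
  have hc := (torusCell_subset_iff hp).1 h
  refine ⟨fun i => if s₂ i = s i then 0 else 2, fun i => ?_, funext fun i => ?_⟩
  · by_cases h' : s₂ i = s i <;> simp [h']
  · by_cases h' : s₂ i = s i
    · simp only [if_pos h', off_zero, add_zero]; exact h'
    · have hss : s i = s₂ i + 1 := by
        cases hki : k i
        · rcases (hc i).2 hki with h'' | ⟨-, h''⟩
          · exact absurd h''.symm h'
          · exact h''
        · exact absurd ((hc i).1 hki).2.symm h'
      simp only [if_neg h', off_two]
      rw [hss]; ring

lemma exists_off_of_subset (hp : ∀ i, 3 ≤ p i) {s s₁ : ∀ i, ZMod (p i)} {k k₁ : Fin ℓ → Bool}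
    (h : torusCell p s₁ k₁ ⊆ torusCell p s k) :
    ∃ d : Fin ℓ → Fin 3, (∀ i, d i = 0 ∨ d i = 1) ∧ s₁ = fun i => s i + off (p i) (d i) := by
  have hc := (torusCell_subset_iff hp).1 h
  refine ⟨fun i => if s₁ i = s i then 0 else 1, fun i => ?_, funext fun i => ?_⟩
  · by_cases h' : s₁ i = s i <;> simp [h']
  · by_cases h' : s₁ i = s i
    · simp only [if_pos h', off_zero, add_zero]; exact h'
    · simp only [if_neg h', off_one]
      cases hki : k₁ i
      · rcases (hc i).2 hki with h'' | ⟨-, h''⟩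
        · exact absurd h'' h'
        · exact h''
      · exact absurd ((hc i).1 hki).2 h'

lemma exists_off_rel_sup (hp : ∀ i, 3 ≤ p i) {s s₁ : ∀ i, ZMod (p i)} {k₁ k₂ : Fin ℓ → Bool}
    {e : Fin ℓ → Fin 3} (he : ∀ i, e i = 0 ∨ e i = 2)
    (h : torusCell p s₁ k₁ ⊆ torusCell p (fun i => s i + off (p i) (e i)) k₂) :
    ∃ d : Fin ℓ → Fin 3, s₁ = fun i => s i + off (p i) (d i) := by
  have hc := (torusCell_subset_iff hp).1 h
  refine ⟨fun i => if s₁ i = s i then 0 else if s₁ i = s i + 1 then 1 else 2,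
    funext fun i => ?_⟩
  by_cases h0 : s₁ i = s i
  · simp only [if_pos h0, off_zero, add_zero]; exact h0
  · by_cases h1 : s₁ i = s i + 1
    · simp only [if_neg h0, if_pos h1, off_one]; exact h1
    · simp only [if_neg h0, if_neg h1, off_two]
      have base : s₁ i = s i + off (p i) (e i) ∨ s₁ i = s i + off (p i) (e i) + 1 := by
        cases hki : k₁ i
        · rcases (hc i).2 hki with h' | ⟨-, h'⟩
          · exact Or.inl h'
          · exact Or.inr h'
        · exact Or.inl ((hc i).1 hki).2
      rcases he i with he' | he'
      · rw [he', off_zero, add_zero] at base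
        rcases base with h' | h'
        · exact absurd h' h0
        · exact absurd h' h1
      · rw [he', off_two] at base
        rcases base with h' | h'
        · exact h'
        · exfalso; apply h0; rw [h', add_assoc, neg_add_cancel, add_zero]

lemma exists_off_rel_sub (hp : ∀ i, 3 ≤ p i) {s s₁ : ∀ i, ZMod (p i)} {k₁ k₂ : Fin ℓ → Bool}
    {d : Fin ℓ → Fin 3} (hd : ∀ i, d i = 0 ∨ d i = 1)
    (h : torusCell p (fun i => s i + off (p i) (d i)) k₂ ⊆ torusCell p s₁ k₁) :
    ∃ e : Fin ℓ → Fin 3, s₁ = fun i => s i + off (p i) (e i) := by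
  have hc := (torusCell_subset_iff hp).1 h
  refine ⟨fun i => if s₁ i = s i then 0 else if s₁ i = s i + 1 then 1 else 2,
    funext fun i => ?_⟩
  by_cases h0 : s₁ i = s i
  · simp only [if_pos h0, off_zero, add_zero]; exact h0
  · by_cases h1 : s₁ i = s i + 1
    · simp only [if_neg h0, if_pos h1, off_one]; exact h1
    · simp only [if_neg h0, if_neg h1, off_two]
      have base : s i + off (p i) (d i) = s₁ i ∨ s i + off (p i) (d i) = s₁ i + 1 := by
        cases hki : k₂ i
        · rcases (hc i).2 hki with h' | ⟨-, h'⟩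
          · exact Or.inl h'
          · exact Or.inr h'
        · exact Or.inl ((hc i).1 hki).2
      rcases hd i with hd' | hd'
      · rw [hd', off_zero, add_zero] at base
        rcases base with h' | h'
        · exact absurd h'.symm h0
        · rw [eq_sub_of_add_eq h'.symm, sub_eq_add_neg]
      · rw [hd', off_one] at base
        rcases base with h' | h'
        · exact absurd h'.symm h1
        · exact absurd (add_right_cancel h').symm h0

lemma cell_mem_skel_iff (hp : ∀ i, 3 ≤ p i) {s : ∀ i, ZMod (p i)} {k : Fin ℓ → Bool} {r : ℕ} :
    torusCell p s k ∈ (torusPre p).skel r ↔ torusRank k = r := by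
  rw [mem_skel_torus hp]
  constructor
  · rintro ⟨s', k', he, hr⟩
    rw [(torusCell_inj hp he).2]; exact hr
  · intro h; exact ⟨s, k, rfl, h⟩

/-- The purely combinatorial description of the neighbours of a torus cell. -/
def Qdat (ℓ : ℕ) (N : NbhdKind) (k : Fin ℓ → Bool) (δ : Fin ℓ → Fin 3)
    (k₁ : Fin ℓ → Bool) : Prop :=
  match N with
  | .adj r₁ r₂ => torusRank k = r₁ ∧ torusRank k₁ = r₁ ∧
      ∃ (e : Fin ℓ → Fin 3) (k₂ : Fin ℓ → Bool), torusRank k₂ = r₂ ∧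
        ∀ i, (e i = 0 ∨ e i = 2) ∧ SubU (k i) (k₂ i) 0 (e i) ∧ SubU (k₁ i) (k₂ i) (δ i) (e i)
  | .coadj r₁ r₂ => torusRank k = r₁ ∧ torusRank k₁ = r₁ ∧
      ∃ (e : Fin ℓ → Fin 3) (k₂ : Fin ℓ → Bool), torusRank k₂ = r₂ ∧
        ∀ i, (e i = 0 ∨ e i = 1) ∧ SubD (k₂ i) (k i) (e i) 0 ∧ SubD (k₂ i) (k₁ i) (e i) (δ i)
  | .inc r₁ r₂ => torusRank k = r₁ ∧ torusRank k₁ = r₂ ∧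
      ∀ i, (δ i = 0 ∨ δ i = 2) ∧ SubU (k i) (k₁ i) 0 (δ i)
  | .coinc r₁ r₂ => torusRank k = r₁ ∧ torusRank k₁ = r₂ ∧
      ∀ i, (δ i = 0 ∨ δ i = 1) ∧ SubD (k₁ i) (k i) (δ i) 0

lemma nbhd_torus_eq (hp : ∀ i, 3 ≤ p i) (N : NbhdKind) (s : ∀ i, ZMod (p i))
    (k : Fin ℓ → Bool) :
    (torusPre p).nbhd N (torusCell p s k) =
      (fun d : (Fin ℓ → Fin 3) × (Fin ℓ → Bool) =>
        torusCell p (fun i => s i + off (p i) (d.1 i)) d.2) '' {d | Qdat ℓ N k d.1 d.2} := by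
  cases N with
  | adj r₁ r₂ =>
    ext y
    simp only [PreCC.nbhd, Set.mem_setOf_eq, Set.mem_image, Qdat, Prod.exists]
    constructor
    · rintro ⟨hx, hy, z, hz, hxz, hyz⟩
      have hk : torusRank k = r₁ := (cell_mem_skel_iff hp).1 hx
      obtain ⟨s₁, k₁, rfl, hk₁⟩ := (mem_skel_torus hp).1 hy
      obtain ⟨s₂, k₂, rfl, hk₂⟩ := (mem_skel_torus hp).1 hz
      obtain ⟨e, he, rfl⟩ := exists_off_of_supset hp hxz
      obtain ⟨d, rfl⟩ := exists_off_rel_sup hp he hyz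
      exact ⟨d, k₁, ⟨hk, hk₁, e, k₂, hk₂, fun i =>
        ⟨he i, ((subU_base hp he).1 hxz) i, ((subset_iff_subU hp he).1 hyz) i⟩⟩, rfl⟩
    · rintro ⟨d, k₁, ⟨hk, hk₁, e, k₂, hk₂, hQ⟩, rfl⟩
      exact ⟨(cell_mem_skel_iff hp).2 hk, (cell_mem_skel_iff hp).2 hk₁,
        torusCell p (fun i => s i + off (p i) (e i)) k₂, (cell_mem_skel_iff hp).2 hk₂,
        (subU_base hp (fun i => (hQ i).1)).2 (fun i => (hQ i).2.1),
        (subset_iff_subU hp (fun i => (hQ i).1)).2 (fun i => (hQ i).2.2)⟩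
  | coadj r₁ r₂ =>
    ext y
    simp only [PreCC.nbhd, Set.mem_setOf_eq, Set.mem_image, Qdat, Prod.exists]
    constructor
    · rintro ⟨hx, hy, z, hz, hzx, hzy⟩
      have hk : torusRank k = r₁ := (cell_mem_skel_iff hp).1 hx
      obtain ⟨s₁, k₁, rfl, hk₁⟩ := (mem_skel_torus hp).1 hy
      obtain ⟨s₂, k₂, rfl, hk₂⟩ := (mem_skel_torus hp).1 hz
      obtain ⟨e, he, rfl⟩ := exists_off_of_subset hp hzx
      obtain ⟨d, rfl⟩ := exists_off_rel_sub hp he hzy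
      exact ⟨d, k₁, ⟨hk, hk₁, e, k₂, hk₂, fun i =>
        ⟨he i, ((subD_base hp he).1 hzx) i, ((subset_iff_subD hp he).1 hzy) i⟩⟩, rfl⟩
    · rintro ⟨d, k₁, ⟨hk, hk₁, e, k₂, hk₂, hQ⟩, rfl⟩
      exact ⟨(cell_mem_skel_iff hp).2 hk, (cell_mem_skel_iff hp).2 hk₁,
        torusCell p (fun i => s i + off (p i) (e i)) k₂, (cell_mem_skel_iff hp).2 hk₂,
        (subD_base hp (fun i => (hQ i).1)).2 (fun i => (hQ i).2.1),
        (subset_iff_subD hp (fun i => (hQ i).1)).2 (fun i => (hQ i).2.2)⟩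
  | inc r₁ r₂ =>
    ext y
    simp only [PreCC.nbhd, Set.mem_setOf_eq, Set.mem_image, Qdat, Prod.exists]
    constructor
    · rintro ⟨hx, hy, hxy⟩
      have hk : torusRank k = r₁ := (cell_mem_skel_iff hp).1 hx
      obtain ⟨s₁, k₁, rfl, hk₁⟩ := (mem_skel_torus hp).1 hy
      obtain ⟨e, he, rfl⟩ := exists_off_of_supset hp hxy
      exact ⟨e, k₁, ⟨hk, hk₁, fun i => ⟨he i, ((subU_base hp he).1 hxy) i⟩⟩, rfl⟩
    · rintro ⟨d, k₁, ⟨hk, hk₁, hQ⟩, rfl⟩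
      exact ⟨(cell_mem_skel_iff hp).2 hk, (cell_mem_skel_iff hp).2 hk₁,
        (subU_base hp (fun i => (hQ i).1)).2 (fun i => (hQ i).2)⟩
  | coinc r₁ r₂ =>
    ext y
    simp only [PreCC.nbhd, Set.mem_setOf_eq, Set.mem_image, Qdat, Prod.exists]
    constructor
    · rintro ⟨hx, hy, hyx⟩
      have hk : torusRank k = r₁ := (cell_mem_skel_iff hp).1 hx
      obtain ⟨s₁, k₁, rfl, hk₁⟩ := (mem_skel_torus hp).1 hy
      obtain ⟨d, hd, rfl⟩ := exists_off_of_subset hp hyx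
      exact ⟨d, k₁, ⟨hk, hk₁, fun i => ⟨hd i, ((subD_base hp hd).1 hyx) i⟩⟩, rfl⟩
    · rintro ⟨d, k₁, ⟨hk, hk₁, hQ⟩, rfl⟩
      exact ⟨(cell_mem_skel_iff hp).2 hk, (cell_mem_skel_iff hp).2 hk₁,
        (subD_base hp (fun i => (hQ i).1)).2 (fun i => (hQ i).2)⟩

end TorusData

section TorusCount
variable {ℓ : ℕ} {p : Fin ℓ → ℕ}

lemma torusRank_eq_card (k : Fin ℓ → Bool) :
    torusRank k = Fintype.card {i // k i = true} := by
  rw [Fintype.card_subtype]; rfl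

lemma torusRank_comp (k : Fin ℓ → Bool) (σ : Equiv.Perm (Fin ℓ)) :
    torusRank (k ∘ σ) = torusRank k := by
  rw [torusRank_eq_card, torusRank_eq_card]
  exact Fintype.card_congr (σ.subtypeEquiv (fun i => by simp))

lemma exists_perm_of_rank_eq {k k' : Fin ℓ → Bool} (h : torusRank k = torusRank k') :
    ∃ σ : Equiv.Perm (Fin ℓ), k' = k ∘ σ := by
  have h1 : Fintype.card {i // k' i = true} = Fintype.card {i // k i = true} := by
    rw [← torusRank_eq_card, ← torusRank_eq_card, h]
  have h2 : Fintype.card {i // ¬ k' i = true} = Fintype.card {i // ¬ k i = true} := by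
    rw [Fintype.card_subtype_compl, Fintype.card_subtype_compl, h1]
  set e₁ := Fintype.equivOfCardEq h1
  set e₂ := Fintype.equivOfCardEq h2
  refine ⟨(Equiv.sumCompl (fun i => k' i = true)).symm.trans
    ((e₁.sumCongr e₂).trans (Equiv.sumCompl (fun i => k i = true))), funext fun i => ?_⟩
  simp only [Function.comp_apply, Equiv.trans_apply]
  by_cases hi : k' i = true
  · rw [Equiv.sumCompl_symm_apply_of_pos (p := fun i => k' i = true) hi]
    simp only [Equiv.sumCongr_apply, Sum.map_inl, Equiv.sumCompl_apply_inl]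
    rw [hi, (e₁ ⟨i, hi⟩).2]
  · rw [Equiv.sumCompl_symm_apply_of_neg (p := fun i => k' i = true) hi]
    simp only [Equiv.sumCongr_apply, Sum.map_inr, Equiv.sumCompl_apply_inr]
    have h3 := (e₂ ⟨i, hi⟩).2
    rw [Bool.not_eq_true] at hi h3
    rw [hi, h3]

lemma Qdat_perm (N : NbhdKind) (k : Fin ℓ → Bool) (σ : Equiv.Perm (Fin ℓ))
    (δ : Fin ℓ → Fin 3) (k₁ : Fin ℓ → Bool) :
    Qdat ℓ N (k ∘ σ) (δ ∘ σ) (k₁ ∘ σ) ↔ Qdat ℓ N k δ k₁ := by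
  cases N with
  | adj r₁ r₂ =>
    simp only [Qdat, torusRank_comp]
    constructor
    · rintro ⟨h1, h2, e, k₂, h3, h4⟩
      refine ⟨h1, h2, e ∘ σ.symm, k₂ ∘ σ.symm, by rw [torusRank_comp]; exact h3, fun i => ?_⟩
      have := h4 (σ.symm i)
      simpa using this
    · rintro ⟨h1, h2, e, k₂, h3, h4⟩
      exact ⟨h1, h2, e ∘ σ, k₂ ∘ σ, by rw [torusRank_comp]; exact h3, fun i => h4 (σ i)⟩
  | coadj r₁ r₂ =>
    simp only [Qdat, torusRank_comp]
    constructor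
    · rintro ⟨h1, h2, e, k₂, h3, h4⟩
      refine ⟨h1, h2, e ∘ σ.symm, k₂ ∘ σ.symm, by rw [torusRank_comp]; exact h3, fun i => ?_⟩
      have := h4 (σ.symm i)
      simpa using this
    · rintro ⟨h1, h2, e, k₂, h3, h4⟩
      exact ⟨h1, h2, e ∘ σ, k₂ ∘ σ, by rw [torusRank_comp]; exact h3, fun i => h4 (σ i)⟩
  | inc r₁ r₂ =>
    simp only [Qdat, torusRank_comp]
    constructor
    · rintro ⟨h1, h2, h4⟩
      refine ⟨h1, h2, fun i => ?_⟩
      have := h4 (σ.symm i)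
      simpa using this
    · rintro ⟨h1, h2, h4⟩
      exact ⟨h1, h2, fun i => h4 (σ i)⟩
  | coinc r₁ r₂ =>
    simp only [Qdat, torusRank_comp]
    constructor
    · rintro ⟨h1, h2, h4⟩
      refine ⟨h1, h2, fun i => ?_⟩
      have := h4 (σ.symm i)
      simpa using this
    · rintro ⟨h1, h2, h4⟩
      exact ⟨h1, h2, fun i => h4 (σ i)⟩

lemma Qdat_comp_symm (N : NbhdKind) (k : Fin ℓ → Bool) (σ : Equiv.Perm (Fin ℓ))
    (δ : Fin ℓ → Fin 3) (k₁ : Fin ℓ → Bool) :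
    Qdat ℓ N (k ∘ σ) δ k₁ ↔ Qdat ℓ N k (δ ∘ σ.symm) (k₁ ∘ σ.symm) := by
  have h := Qdat_perm N k σ (δ ∘ ⇑σ.symm) (k₁ ∘ ⇑σ.symm)
  rw [show (δ ∘ ⇑σ.symm) ∘ ⇑σ = δ from funext fun i => by simp,
      show (k₁ ∘ ⇑σ.symm) ∘ ⇑σ = k₁ from funext fun i => by simp] at h
  exact h

lemma card_Qdat_eq (N : NbhdKind) {k k' : Fin ℓ → Bool} (h : torusRank k = torusRank k') :
    Nat.card {d : (Fin ℓ → Fin 3) × (Fin ℓ → Bool) // Qdat ℓ N k d.1 d.2} =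
      Nat.card {d : (Fin ℓ → Fin 3) × (Fin ℓ → Bool) // Qdat ℓ N k' d.1 d.2} := by
  obtain ⟨σ, rfl⟩ := exists_perm_of_rank_eq h
  refine Nat.card_congr (Equiv.symm
    ⟨fun d => ⟨(d.1.1 ∘ ⇑σ.symm, d.1.2 ∘ ⇑σ.symm), (Qdat_comp_symm N k σ d.1.1 d.1.2).1 d.2⟩,
     fun d => ⟨(d.1.1 ∘ ⇑σ, d.1.2 ∘ ⇑σ), (Qdat_perm N k σ d.1.1 d.1.2).2 d.2⟩,
     fun d => Subtype.ext (Prod.ext_iff.2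
       ⟨funext fun i => by simp, funext fun i => by simp⟩),
     fun d => Subtype.ext (Prod.ext_iff.2
       ⟨funext fun i => by simp, funext fun i => by simp⟩)⟩)

def tgtRank : NbhdKind → ℕ
  | .adj r₁ _ => r₁
  | .coadj r₁ _ => r₁
  | .inc _ r₂ => r₂
  | .coinc _ r₂ => r₂

lemma mem_skel_of_mem_nbhd {S : Type*} {X : PreCC S} {N : NbhdKind} {x y : Finset S}
    (h : y ∈ X.nbhd N x) : y ∈ X.skel (tgtRank N) := by
  cases N <;> exact h.2.1

def kcan (ℓ r : ℕ) : Fin ℓ → Bool := fun i => decide (i.1 < r)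

lemma torusRank_kcan {r : ℕ} (h : r ≤ ℓ) : torusRank (kcan ℓ r) = r := by
  rw [torusRank_eq_card]
  have e : {i : Fin ℓ // kcan ℓ r i = true} ≃ Fin r :=
    { toFun := fun x => ⟨x.1.1, by have := x.2; simpa [kcan] using this⟩
      invFun := fun j => ⟨⟨j.1, lt_of_lt_of_le j.2 h⟩, by simp [kcan, j.2]⟩
      left_inv := fun x => Subtype.ext (Fin.ext rfl)
      right_inv := fun j => rfl }
  rw [Fintype.card_congr e, Fintype.card_fin]

noncomputable def refc (ℓ : ℕ) (N : NbhdKind) (r : ℕ) : ℕ :=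
  Nat.card {d : (Fin ℓ → Fin 3) × (Fin ℓ → Bool) // Qdat ℓ N (kcan ℓ r) d.1 d.2}

lemma nbhd_torus_finite (hp : ∀ i, 3 ≤ p i) (N : NbhdKind) (s : ∀ i, ZMod (p i))
    (k : Fin ℓ → Bool) : ((torusPre p).nbhd N (torusCell p s k)).Finite := by
  rw [nbhd_torus_eq hp N s k]
  exact (Set.toFinite _).image _

lemma ncard_nbhd_torus (hp : ∀ i, 3 ≤ p i) (N : NbhdKind) (s : ∀ i, ZMod (p i))
    (k : Fin ℓ → Bool) :
    ((torusPre p).nbhd N (torusCell p s k)).ncard = refc ℓ N (torusRank k) := by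
  rw [nbhd_torus_eq hp N s k]
  have hinj : Set.InjOn (fun d : (Fin ℓ → Fin 3) × (Fin ℓ → Bool) =>
      torusCell p (fun i => s i + off (p i) (d.1 i)) d.2) {d | Qdat ℓ N k d.1 d.2} := by
    intro d1 _ d2 _ he
    obtain ⟨hs, hk⟩ := torusCell_inj hp he
    refine Prod.ext_iff.2 ⟨funext fun i => off_inj (hp i) ?_, hk⟩
    exact add_left_cancel (congrFun hs i)
  rw [Set.ncard_image_of_injOn hinj, ← Nat.card_coe_set_eq]
  have hfin : Nat.card {d : (Fin ℓ → Fin 3) × (Fin ℓ → Bool) // Qdat ℓ N k d.1 d.2} =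
      refc ℓ N (torusRank k) := by
    rw [refc]
    exact card_Qdat_eq N (by rw [torusRank_kcan (torusRank_le k)])
  exact hfin

end TorusCount

section DisjSum
variable {S S' : Type*} {X : PreCC S} {Y : PreCC S'}

lemma mem_cells_disjSum {z : Finset (S ⊕ S')} :
    z ∈ (X.disjSum Y).cells ↔ (∃ x ∈ X.cells, z = x.map Function.Embedding.inl) ∨
      (∃ y ∈ Y.cells, z = y.map Function.Embedding.inr) := by
  show z ∈ _ ∪ _ ↔ _
  simp only [Set.mem_union, Set.mem_image]
  constructor
  · rintro (⟨x, hx, rfl⟩ | ⟨y, hy, rfl⟩)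
    · exact Or.inl ⟨x, hx, rfl⟩
    · exact Or.inr ⟨y, hy, rfl⟩
  · rintro (⟨x, hx, rfl⟩ | ⟨y, hy, rfl⟩)
    · exact Or.inl ⟨x, hx, rfl⟩
    · exact Or.inr ⟨y, hy, rfl⟩

lemma inl_ne_inr {x : Finset S} {y : Finset S'} (hx : x.Nonempty) :
    x.map Function.Embedding.inl ≠ y.map Function.Embedding.inr := by
  obtain ⟨a, ha⟩ := hx
  intro h
  have : (Sum.inl a : S ⊕ S') ∈ y.map Function.Embedding.inr :=
    h ▸ Finset.mem_map_of_mem _ ha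
  simp [Finset.mem_map] at this

lemma rk_disjSum_inl {x : Finset S} (hx : x ∈ X.cells) (hne : x.Nonempty) :
    (X.disjSum Y).rk (x.map Function.Embedding.inl) = X.rk x := by
  have hset : ({r | ∃ x' ∈ X.cells, (x.map Function.Embedding.inl : Finset (S ⊕ S')) =
        x'.map Function.Embedding.inl ∧ r = X.rk x'} ∪
      {r | ∃ y ∈ Y.cells, x.map Function.Embedding.inl =
        y.map Function.Embedding.inr ∧ r = Y.rk y}) = {X.rk x} := by
    ext r
    simp only [Set.mem_union, Set.mem_setOf_eq, Set.mem_singleton_iff]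
    constructor
    · rintro (⟨x', hx', he, rfl⟩ | ⟨y, hy, he, rfl⟩)
      · rw [Finset.map_injective _ he]
      · exact absurd he (inl_ne_inr hne)
    · rintro rfl
      exact Or.inl ⟨x, hx, rfl, rfl⟩
  show sInf _ = _
  rw [hset, csInf_singleton]

lemma rk_disjSum_inr {y : Finset S'} (hy : y ∈ Y.cells) (hne : y.Nonempty) :
    (X.disjSum Y).rk (y.map Function.Embedding.inr) = Y.rk y := by
  have hset : ({r | ∃ x' ∈ X.cells, (y.map Function.Embedding.inr : Finset (S ⊕ S')) =
        x'.map Function.Embedding.inl ∧ r = X.rk x'} ∪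
      {r | ∃ y' ∈ Y.cells, (y.map Function.Embedding.inr : Finset (S ⊕ S')) =
        y'.map Function.Embedding.inr ∧ r = Y.rk y'}) = {Y.rk y} := by
    ext r
    simp only [Set.mem_union, Set.mem_setOf_eq, Set.mem_singleton_iff]
    constructor
    · rintro (⟨x', hx', he, rfl⟩ | ⟨y', hy', he, rfl⟩)
      · exfalso
        obtain ⟨b, hb⟩ := hne
        have := he ▸ Finset.mem_map_of_mem (Function.Embedding.inr) hb
        simp [Finset.mem_map] at this
      · rw [Finset.map_injective _ he]
    · rintro rfl
      exact Or.inr ⟨y, hy, rfl, rfl⟩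
  show sInf _ = _
  rw [hset, csInf_singleton]

lemma disjSum_cell_nonempty (hX : ∀ x ∈ X.cells, x.Nonempty) (hY : ∀ y ∈ Y.cells, y.Nonempty)
    {z : Finset (S ⊕ S')} (hz : z ∈ (X.disjSum Y).cells) : z.Nonempty := by
  rcases mem_cells_disjSum.1 hz with ⟨x, hx, rfl⟩ | ⟨y, hy, rfl⟩
  · exact Finset.map_nonempty.2 (hX x hx)
  · exact Finset.map_nonempty.2 (hY y hy)

lemma mem_skel_disjSum_inl {x : Finset S} (hx : x ∈ X.cells) (hne : x.Nonempty) {r : ℕ} :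
    x.map Function.Embedding.inl ∈ (X.disjSum Y).skel r ↔ x ∈ X.skel r := by
  constructor
  · rintro ⟨-, hr⟩
    exact ⟨hx, by rw [← rk_disjSum_inl (Y := Y) hx hne]; exact hr⟩
  · rintro ⟨-, hr⟩
    exact ⟨Set.mem_union_left _ ⟨x, hx, rfl⟩, by rw [rk_disjSum_inl hx hne, hr]⟩

lemma mem_skel_disjSum_inr {y : Finset S'} (hy : y ∈ Y.cells) (hne : y.Nonempty) {r : ℕ} :
    y.map Function.Embedding.inr ∈ (X.disjSum Y).skel r ↔ y ∈ Y.skel r := by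
  constructor
  · rintro ⟨-, hr⟩
    exact ⟨hy, by rw [← rk_disjSum_inr (X := X) hy hne]; exact hr⟩
  · rintro ⟨-, hr⟩
    exact ⟨Set.mem_union_right _ ⟨y, hy, rfl⟩, by rw [rk_disjSum_inr hy hne, hr]⟩

lemma left_of_subset_inl {z : Finset (S ⊕ S')} {x : Finset S}
    (hz : z ∈ (X.disjSum Y).cells) (hzne : z.Nonempty)
    (h : z ⊆ x.map Function.Embedding.inl) :
    ∃ z₀ ∈ X.cells, z = z₀.map Function.Embedding.inl := by
  rcases mem_cells_disjSum.1 hz with ⟨x', hx', rfl⟩ | ⟨y, hy, rfl⟩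
  · exact ⟨x', hx', rfl⟩
  · exfalso
    obtain ⟨b, hb⟩ := Finset.map_nonempty.1 (by exact hzne)
    have := h (Finset.mem_map_of_mem _ hb)
    simp [Finset.mem_map] at this

lemma left_of_supset_inl {z : Finset (S ⊕ S')} {x : Finset S}
    (hz : z ∈ (X.disjSum Y).cells) (hxne : x.Nonempty)
    (h : x.map Function.Embedding.inl ⊆ z) :
    ∃ z₀ ∈ X.cells, z = z₀.map Function.Embedding.inl := by
  rcases mem_cells_disjSum.1 hz with ⟨x', hx', rfl⟩ | ⟨y, hy, rfl⟩
  · exact ⟨x', hx', rfl⟩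
  · exfalso
    obtain ⟨a, ha⟩ := hxne
    have := h (Finset.mem_map_of_mem _ ha)
    simp [Finset.mem_map] at this

lemma right_of_subset_inr {z : Finset (S ⊕ S')} {y : Finset S'}
    (hz : z ∈ (X.disjSum Y).cells) (hzne : z.Nonempty)
    (h : z ⊆ y.map Function.Embedding.inr) :
    ∃ z₀ ∈ Y.cells, z = z₀.map Function.Embedding.inr := by
  rcases mem_cells_disjSum.1 hz with ⟨x', hx', rfl⟩ | ⟨y', hy', rfl⟩
  · exfalso
    obtain ⟨b, hb⟩ := Finset.map_nonempty.1 (by exact hzne)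
    have := h (Finset.mem_map_of_mem _ hb)
    simp [Finset.mem_map] at this
  · exact ⟨y', hy', rfl⟩

lemma right_of_supset_inr {z : Finset (S ⊕ S')} {y : Finset S'}
    (hz : z ∈ (X.disjSum Y).cells) (hyne : y.Nonempty)
    (h : y.map Function.Embedding.inr ⊆ z) :
    ∃ z₀ ∈ Y.cells, z = z₀.map Function.Embedding.inr := by
  rcases mem_cells_disjSum.1 hz with ⟨x', hx', rfl⟩ | ⟨y', hy', rfl⟩
  · exfalso
    obtain ⟨a, ha⟩ := hyne
    have := h (Finset.mem_map_of_mem _ ha)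
    simp [Finset.mem_map] at this
  · exact ⟨y', hy', rfl⟩

lemma nbhd_disjSum_inl (hX : ∀ x ∈ X.cells, x.Nonempty) (hY : ∀ y ∈ Y.cells, y.Nonempty)
    (N : NbhdKind) {x : Finset S} (hx : x ∈ X.cells) :
    (X.disjSum Y).nbhd N (x.map Function.Embedding.inl) =
      (fun w => w.map Function.Embedding.inl) '' X.nbhd N x := by
  have hne := hX x hx
  cases N with
  | adj r₁ r₂ =>
    ext v
    simp only [PreCC.nbhd, Set.mem_setOf_eq, Set.mem_image]
    constructor
    · rintro ⟨hx', hv, z, hz, hxz, hvz⟩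
      obtain ⟨z₀, hz₀, rfl⟩ := left_of_supset_inl hz.1 hne hxz
      obtain ⟨v₀, hv₀, rfl⟩ := left_of_subset_inl hv.1 (disjSum_cell_nonempty hX hY hv.1) hvz
      exact ⟨v₀, ⟨(mem_skel_disjSum_inl hx hne).1 hx',
        (mem_skel_disjSum_inl hv₀ (hX _ hv₀)).1 hv, z₀,
        (mem_skel_disjSum_inl hz₀ (hX _ hz₀)).1 hz,
        Finset.map_subset_map.1 hxz, Finset.map_subset_map.1 hvz⟩, rfl⟩
    · rintro ⟨v₀, ⟨hx', hv₀, z₀, hz₀, hxz, hvz⟩, rfl⟩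
      exact ⟨(mem_skel_disjSum_inl hx hne).2 hx',
        (mem_skel_disjSum_inl hv₀.1 (hX _ hv₀.1)).2 hv₀,
        z₀.map Function.Embedding.inl,
        (mem_skel_disjSum_inl hz₀.1 (hX _ hz₀.1)).2 hz₀,
        Finset.map_subset_map.2 hxz, Finset.map_subset_map.2 hvz⟩
  | coadj r₁ r₂ =>
    ext v
    simp only [PreCC.nbhd, Set.mem_setOf_eq, Set.mem_image]
    constructor
    · rintro ⟨hx', hv, z, hz, hzx, hzv⟩
      obtain ⟨z₀, hz₀, rfl⟩ := left_of_subset_inl hz.1 (disjSum_cell_nonempty hX hY hz.1) hzx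
      obtain ⟨v₀, hv₀, rfl⟩ := left_of_supset_inl hv.1 (hX _ hz₀) hzv
      exact ⟨v₀, ⟨(mem_skel_disjSum_inl hx hne).1 hx',
        (mem_skel_disjSum_inl hv₀ (hX _ hv₀)).1 hv, z₀,
        (mem_skel_disjSum_inl hz₀ (hX _ hz₀)).1 hz,
        Finset.map_subset_map.1 hzx, Finset.map_subset_map.1 hzv⟩, rfl⟩
    · rintro ⟨v₀, ⟨hx', hv₀, z₀, hz₀, hzx, hzv⟩, rfl⟩
      exact ⟨(mem_skel_disjSum_inl hx hne).2 hx',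
        (mem_skel_disjSum_inl hv₀.1 (hX _ hv₀.1)).2 hv₀,
        z₀.map Function.Embedding.inl,
        (mem_skel_disjSum_inl hz₀.1 (hX _ hz₀.1)).2 hz₀,
        Finset.map_subset_map.2 hzx, Finset.map_subset_map.2 hzv⟩
  | inc r₁ r₂ =>
    ext v
    simp only [PreCC.nbhd, Set.mem_setOf_eq, Set.mem_image]
    constructor
    · rintro ⟨hx', hv, hxv⟩
      obtain ⟨v₀, hv₀, rfl⟩ := left_of_supset_inl hv.1 hne hxv
      exact ⟨v₀, ⟨(mem_skel_disjSum_inl hx hne).1 hx',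
        (mem_skel_disjSum_inl hv₀ (hX _ hv₀)).1 hv, Finset.map_subset_map.1 hxv⟩, rfl⟩
    · rintro ⟨v₀, ⟨hx', hv₀, hxv⟩, rfl⟩
      exact ⟨(mem_skel_disjSum_inl hx hne).2 hx',
        (mem_skel_disjSum_inl hv₀.1 (hX _ hv₀.1)).2 hv₀, Finset.map_subset_map.2 hxv⟩
  | coinc r₁ r₂ =>
    ext v
    simp only [PreCC.nbhd, Set.mem_setOf_eq, Set.mem_image]
    constructor
    · rintro ⟨hx', hv, hvx⟩
      obtain ⟨v₀, hv₀, rfl⟩ := left_of_subset_inl hv.1 (disjSum_cell_nonempty hX hY hv.1) hvx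
      exact ⟨v₀, ⟨(mem_skel_disjSum_inl hx hne).1 hx',
        (mem_skel_disjSum_inl hv₀ (hX _ hv₀)).1 hv, Finset.map_subset_map.1 hvx⟩, rfl⟩
    · rintro ⟨v₀, ⟨hx', hv₀, hvx⟩, rfl⟩
      exact ⟨(mem_skel_disjSum_inl hx hne).2 hx',
        (mem_skel_disjSum_inl hv₀.1 (hX _ hv₀.1)).2 hv₀, Finset.map_subset_map.2 hvx⟩

lemma nbhd_disjSum_inr (hX : ∀ x ∈ X.cells, x.Nonempty) (hY : ∀ y ∈ Y.cells, y.Nonempty)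
    (N : NbhdKind) {y : Finset S'} (hy : y ∈ Y.cells) :
    (X.disjSum Y).nbhd N (y.map Function.Embedding.inr) =
      (fun w => w.map Function.Embedding.inr) '' Y.nbhd N y := by
  have hne := hY y hy
  cases N with
  | adj r₁ r₂ =>
    ext v
    simp only [PreCC.nbhd, Set.mem_setOf_eq, Set.mem_image]
    constructor
    · rintro ⟨hx', hv, z, hz, hxz, hvz⟩
      obtain ⟨z₀, hz₀, rfl⟩ := right_of_supset_inr hz.1 hne hxz
      obtain ⟨v₀, hv₀, rfl⟩ := right_of_subset_inr hv.1 (disjSum_cell_nonempty hX hY hv.1) hvz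
      exact ⟨v₀, ⟨(mem_skel_disjSum_inr hy hne).1 hx',
        (mem_skel_disjSum_inr hv₀ (hY _ hv₀)).1 hv, z₀,
        (mem_skel_disjSum_inr hz₀ (hY _ hz₀)).1 hz,
        Finset.map_subset_map.1 hxz, Finset.map_subset_map.1 hvz⟩, rfl⟩
    · rintro ⟨v₀, ⟨hx', hv₀, z₀, hz₀, hxz, hvz⟩, rfl⟩
      exact ⟨(mem_skel_disjSum_inr hy hne).2 hx',
        (mem_skel_disjSum_inr hv₀.1 (hY _ hv₀.1)).2 hv₀,
        z₀.map Function.Embedding.inr,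
        (mem_skel_disjSum_inr hz₀.1 (hY _ hz₀.1)).2 hz₀,
        Finset.map_subset_map.2 hxz, Finset.map_subset_map.2 hvz⟩
  | coadj r₁ r₂ =>
    ext v
    simp only [PreCC.nbhd, Set.mem_setOf_eq, Set.mem_image]
    constructor
    · rintro ⟨hx', hv, z, hz, hzx, hzv⟩
      obtain ⟨z₀, hz₀, rfl⟩ := right_of_subset_inr hz.1 (disjSum_cell_nonempty hX hY hz.1) hzx
      obtain ⟨v₀, hv₀, rfl⟩ := right_of_supset_inr hv.1 (hY _ hz₀) hzv
      exact ⟨v₀, ⟨(mem_skel_disjSum_inr hy hne).1 hx',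
        (mem_skel_disjSum_inr hv₀ (hY _ hv₀)).1 hv, z₀,
        (mem_skel_disjSum_inr hz₀ (hY _ hz₀)).1 hz,
        Finset.map_subset_map.1 hzx, Finset.map_subset_map.1 hzv⟩, rfl⟩
    · rintro ⟨v₀, ⟨hx', hv₀, z₀, hz₀, hzx, hzv⟩, rfl⟩
      exact ⟨(mem_skel_disjSum_inr hy hne).2 hx',
        (mem_skel_disjSum_inr hv₀.1 (hY _ hv₀.1)).2 hv₀,
        z₀.map Function.Embedding.inr,
        (mem_skel_disjSum_inr hz₀.1 (hY _ hz₀.1)).2 hz₀,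
        Finset.map_subset_map.2 hzx, Finset.map_subset_map.2 hzv⟩
  | inc r₁ r₂ =>
    ext v
    simp only [PreCC.nbhd, Set.mem_setOf_eq, Set.mem_image]
    constructor
    · rintro ⟨hx', hv, hxv⟩
      obtain ⟨v₀, hv₀, rfl⟩ := right_of_supset_inr hv.1 hne hxv
      exact ⟨v₀, ⟨(mem_skel_disjSum_inr hy hne).1 hx',
        (mem_skel_disjSum_inr hv₀ (hY _ hv₀)).1 hv, Finset.map_subset_map.1 hxv⟩, rfl⟩
    · rintro ⟨v₀, ⟨hx', hv₀, hxv⟩, rfl⟩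
      exact ⟨(mem_skel_disjSum_inr hy hne).2 hx',
        (mem_skel_disjSum_inr hv₀.1 (hY _ hv₀.1)).2 hv₀, Finset.map_subset_map.2 hxv⟩
  | coinc r₁ r₂ =>
    ext v
    simp only [PreCC.nbhd, Set.mem_setOf_eq, Set.mem_image]
    constructor
    · rintro ⟨hx', hv, hvx⟩
      obtain ⟨v₀, hv₀, rfl⟩ := right_of_subset_inr hv.1 (disjSum_cell_nonempty hX hY hv.1) hvx
      exact ⟨v₀, ⟨(mem_skel_disjSum_inr hy hne).1 hx',
        (mem_skel_disjSum_inr hv₀ (hY _ hv₀)).1 hv, Finset.map_subset_map.1 hvx⟩, rfl⟩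
    · rintro ⟨v₀, ⟨hx', hv₀, hvx⟩, rfl⟩
      exact ⟨(mem_skel_disjSum_inr hy hne).2 hx',
        (mem_skel_disjSum_inr hv₀.1 (hY _ hv₀.1)).2 hv₀, Finset.map_subset_map.2 hvx⟩

end DisjSum

section Feat

/-- The rank-indexed abstract feature function computed by a HOMP model. -/
noncomputable def ff {D : Type*} {ℓ' : ℕ} (M : HOMP D ℓ') (ℓ : ℕ) : ℕ → ℕ → D
  | 0, _ => M.init
  | t+1, r => M.act t <| M.comb t fun N => M.agg t N.1 <|
      Multiset.replicate (refc ℓ N.1 r) (M.msg t N.1 r (ff M ℓ t r) (ff M ℓ t (tgtRank N.1)))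

lemma feat_torus {D : Type*} {ℓ' ℓ : ℕ} {p : Fin ℓ → ℕ} (hp : ∀ i, 3 ≤ p i)
    (M : HOMP D ℓ') (t : ℕ) :
    ∀ (s : ∀ i, ZMod (p i)) (k : Fin ℓ → Bool),
      M.feat (torusPre p) t (torusCell p s k) = ff M ℓ t (torusRank k) := by
  induction t with
  | zero => intro s k; rfl
  | succ t ih =>
    intro s k
    rw [HOMP.feat, ff]
    congr 1
    congr 1
    funext N
    congr 1
    have hfin := nbhd_torus_finite hp N.1 s k
    rw [setMultiset, dif_pos hfin]
    refine Multiset.eq_replicate.2 ⟨?_, ?_⟩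
    · rw [Multiset.card_map]
      have h1 : (hfin.toFinset.val.card : ℕ) = hfin.toFinset.card := rfl
      rw [h1, ← Set.ncard_eq_toFinset_card _ hfin, ncard_nbhd_torus hp]
    · intro b hb
      rw [Multiset.mem_map] at hb
      obtain ⟨y, hy, rfl⟩ := hb
      have hy' : y ∈ (torusPre p).nbhd N.1 (torusCell p s k) :=
        (Set.Finite.mem_toFinset hfin).1 (by exact hy)
      have hskel := mem_skel_of_mem_nbhd hy'
      obtain ⟨s₁, k₁, rfl, hk₁⟩ := (mem_skel_torus hp).1 hskel
      rw [ih s k, ih s₁ k₁, hk₁, rk_torusCell hp]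

lemma cells_torus_nonempty {ℓ : ℕ} {p : Fin ℓ → ℕ} :
    ∀ x ∈ (torusPre p).cells, x.Nonempty := by
  rintro x ⟨s, k, rfl⟩
  exact torusCell_nonempty s k

lemma feat_disj {D : Type*} {ℓ' ℓ : ℕ} {p₁ p₂ : Fin ℓ → ℕ}
    (hp₁ : ∀ i, 3 ≤ p₁ i) (hp₂ : ∀ i, 3 ≤ p₂ i) (M : HOMP D ℓ') (t : ℕ) :
    (∀ (s : ∀ i, ZMod (p₁ i)) (k : Fin ℓ → Bool),
      M.feat ((torusPre p₁).disjSum (torusPre p₂)) t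
        ((torusCell p₁ s k).map Function.Embedding.inl) = ff M ℓ t (torusRank k)) ∧
    (∀ (s : ∀ i, ZMod (p₂ i)) (k : Fin ℓ → Bool),
      M.feat ((torusPre p₁).disjSum (torusPre p₂)) t
        ((torusCell p₂ s k).map Function.Embedding.inr) = ff M ℓ t (torusRank k)) := by
  induction t with
  | zero => exact ⟨fun _ _ => rfl, fun _ _ => rfl⟩
  | succ t ih =>
    constructor
    · intro s k
      rw [HOMP.feat, ff]
      congr 1
      congr 1
      funext N
      congr 1
      have hx : torusCell p₁ s k ∈ (torusPre p₁).cells := ⟨s, k, rfl⟩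
      rw [nbhd_disjSum_inl cells_torus_nonempty cells_torus_nonempty N.1 hx]
      have hfin0 := nbhd_torus_finite hp₁ N.1 s k
      have hfin : ((fun w => w.map (Function.Embedding.inl (β := ∀ i, ZMod (p₂ i)))) ''
          (torusPre p₁).nbhd N.1 (torusCell p₁ s k)).Finite := hfin0.image _
      rw [setMultiset, dif_pos hfin]
      refine Multiset.eq_replicate.2 ⟨?_, ?_⟩
      · rw [Multiset.card_map]
        have h1 : (hfin.toFinset.val.card : ℕ) = hfin.toFinset.card := rfl
        rw [h1, ← Set.ncard_eq_toFinset_card _ hfin,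
          Set.ncard_image_of_injective _ (Finset.map_injective _),
          ncard_nbhd_torus hp₁]
      · intro b hb
        rw [Multiset.mem_map] at hb
        obtain ⟨v, hv, rfl⟩ := hb
        have hv' := (Set.Finite.mem_toFinset hfin).1 (by exact hv)
        obtain ⟨y, hy, rfl⟩ := hv'
        have hskel := mem_skel_of_mem_nbhd hy
        obtain ⟨s₁, k₁, rfl, hk₁⟩ := (mem_skel_torus hp₁).1 hskel
        rw [ih.1 s k, ih.1 s₁ k₁, hk₁, rk_disjSum_inl hx (torusCell_nonempty s k),
          rk_torusCell hp₁]
    · intro s k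
      rw [HOMP.feat, ff]
      congr 1
      congr 1
      funext N
      congr 1
      have hx : torusCell p₂ s k ∈ (torusPre p₂).cells := ⟨s, k, rfl⟩
      rw [nbhd_disjSum_inr cells_torus_nonempty cells_torus_nonempty N.1 hx]
      have hfin0 := nbhd_torus_finite hp₂ N.1 s k
      have hfin : ((fun w => w.map (Function.Embedding.inr (α := ∀ i, ZMod (p₁ i)))) ''
          (torusPre p₂).nbhd N.1 (torusCell p₂ s k)).Finite := hfin0.image _
      rw [setMultiset, dif_pos hfin]
      refine Multiset.eq_replicate.2 ⟨?_, ?_⟩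
      · rw [Multiset.card_map]
        have h1 : (hfin.toFinset.val.card : ℕ) = hfin.toFinset.card := rfl
        rw [h1, ← Set.ncard_eq_toFinset_card _ hfin,
          Set.ncard_image_of_injective _ (Finset.map_injective _),
          ncard_nbhd_torus hp₂]
      · intro b hb
        rw [Multiset.mem_map] at hb
        obtain ⟨v, hv, rfl⟩ := hb
        have hv' := (Set.Finite.mem_toFinset hfin).1 (by exact hv)
        obtain ⟨y, hy, rfl⟩ := hv'
        have hskel := mem_skel_of_mem_nbhd hy
        obtain ⟨s₁, k₁, rfl, hk₁⟩ := (mem_skel_torus hp₂).1 hskel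
        rw [ih.2 s k, ih.2 s₁ k₁, hk₁, rk_disjSum_inr hx (torusCell_nonempty s k),
          rk_torusCell hp₂]

lemma out_eq_of_feat {D : Type*} {ℓ' : ℕ} {S : Type*} (M : HOMP D ℓ') (X : PreCC S)
    (hfin : X.cells.Finite) (g : ℕ → D)
    (h : ∀ x ∈ X.cells, M.feat X M.T x = g (X.rk x)) :
    M.out X = M.readout (((setMultiset X.cells).map X.rk).map g) := by
  rw [HOMP.out, Multiset.map_map]
  congr 1
  apply Multiset.map_congr rfl
  intro x hx
  have hx' : x ∈ X.cells := by
    rw [setMultiset, dif_pos hfin] at hx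
    exact (Set.Finite.mem_toFinset hfin).1 (Finset.mem_def.2 hx)
  exact h x hx'

lemma count_map_rk {S : Type*} {X : PreCC S} (hfin : X.cells.Finite) (r : ℕ) :
    Multiset.count r ((setMultiset X.cells).map X.rk) = (X.skel r).ncard := by
  rw [setMultiset, dif_pos hfin, Multiset.count_map]
  have hskelfin : (X.skel r).Finite := hfin.subset fun x hx => hx.1
  rw [Set.ncard_eq_toFinset_card _ hskelfin]
  have : hskelfin.toFinset = hfin.toFinset.filter (fun a => r = X.rk a) := by
    ext a
    simp only [Set.Finite.mem_toFinset, Finset.mem_filter, PreCC.skel, Set.mem_setOf_eq]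
    exact ⟨fun ⟨h1, h2⟩ => ⟨h1, h2.symm⟩, fun ⟨h1, h2⟩ => ⟨h1, h2.symm⟩⟩
  rw [this]
  rfl

lemma ncard_skel_torus {ℓ : ℕ} {p : Fin ℓ → ℕ} (hp : ∀ i, 3 ≤ p i) (r : ℕ) :
    ((torusPre p).skel r).ncard =
      (∏ i, p i) * Nat.card {k : Fin ℓ → Bool // torusRank k = r} := by
  haveI : ∀ i, NeZero (p i) := fun i => ⟨by have := hp i; omega⟩
  rw [← Nat.card_coe_set_eq]
  have e : ((∀ i, ZMod (p i)) × {k : Fin ℓ → Bool // torusRank k = r}) ≃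
      ((torusPre p).skel r) := by
    refine Equiv.ofBijective
      (fun sk => ⟨torusCell p sk.1 sk.2.1, (cell_mem_skel_iff hp).2 sk.2.2⟩) ⟨?_, ?_⟩
    · rintro ⟨s1, k1, hk1⟩ ⟨s2, k2, hk2⟩ he
      have he' : torusCell p s1 k1 = torusCell p s2 k2 := congrArg Subtype.val he
      obtain ⟨hs, hk⟩ := torusCell_inj hp he'
      subst hs
      exact Prod.ext_iff.2 ⟨rfl, Subtype.ext hk⟩
    · rintro ⟨x, hx⟩
      obtain ⟨s, k, rfl, hk⟩ := (mem_skel_torus hp).1 hx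
      exact ⟨(s, ⟨k, hk⟩), rfl⟩
  rw [← Nat.card_congr e, Nat.card_prod, Nat.card_pi]
  congr 1
  exact Finset.prod_congr rfl fun i _ => Nat.card_zmod (p i)

lemma ncard_skel_disjSum {S S' : Type*} {X : PreCC S} {Y : PreCC S'}
    (hX : ∀ x ∈ X.cells, x.Nonempty) (hY : ∀ y ∈ Y.cells, y.Nonempty)
    (hfinX : X.cells.Finite) (hfinY : Y.cells.Finite) (r : ℕ) :
    ((X.disjSum Y).skel r).ncard = (X.skel r).ncard + (Y.skel r).ncard := by
  have himage : (X.disjSum Y).skel r =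
      ((fun w => w.map Function.Embedding.inl) '' X.skel r) ∪
      ((fun w => w.map Function.Embedding.inr) '' Y.skel r) := by
    ext z
    constructor
    · rintro ⟨hz, hr⟩
      rcases mem_cells_disjSum.1 hz with ⟨x, hx, rfl⟩ | ⟨y, hy, rfl⟩
      · exact Or.inl ⟨x, (mem_skel_disjSum_inl hx (hX x hx)).1 ⟨hz, hr⟩, rfl⟩
      · exact Or.inr ⟨y, (mem_skel_disjSum_inr hy (hY y hy)).1 ⟨hz, hr⟩, rfl⟩
    · rintro (⟨x, hx, rfl⟩ | ⟨y, hy, rfl⟩)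
      · exact (mem_skel_disjSum_inl hx.1 (hX _ hx.1)).2 hx
      · exact (mem_skel_disjSum_inr hy.1 (hY _ hy.1)).2 hy
  have hfX : (((fun w : Finset S => w.map Function.Embedding.inl) '' X.skel r :
      Set (Finset (S ⊕ S')))).Finite :=
    (hfinX.subset fun x hx => hx.1).image _
  have hfY : (((fun w : Finset S' => w.map Function.Embedding.inr) '' Y.skel r :
      Set (Finset (S ⊕ S')))).Finite :=
    (hfinY.subset fun y hy => hy.1).image _
  have hdisj : Disjoint
      ((fun w : Finset S => w.map Function.Embedding.inl) '' X.skel r :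
        Set (Finset (S ⊕ S')))
      ((fun w : Finset S' => w.map Function.Embedding.inr) '' Y.skel r :
        Set (Finset (S ⊕ S'))) := by
    rw [Set.disjoint_left]
    rintro z ⟨x, hx, rfl⟩ ⟨y, hy, he⟩
    exact inl_ne_inr (hX _ hx.1) he.symm
  rw [himage, Set.ncard_union_eq hdisj hfX hfY,
    Set.ncard_image_of_injective _ (Finset.map_injective _),
    Set.ncard_image_of_injective _ (Finset.map_injective _)]

lemma cells_torus_finite {ℓ : ℕ} {p : Fin ℓ → ℕ} (hp : ∀ i, 3 ≤ p i) :
    (torusPre p).cells.Finite := by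
  haveI : ∀ i, NeZero (p i) := fun i => ⟨by have := hp i; omega⟩
  exact Set.toFinite _

lemma cells_disjSum_finite {S S' : Type*} {X : PreCC S} {Y : PreCC S'}
    (hfinX : X.cells.Finite) (hfinY : Y.cells.Finite) :
    (X.disjSum Y).cells.Finite :=
  (hfinX.image _).union (hfinY.image _)

end Feat

section Connect
variable {ℓ : ℕ} {p : Fin ℓ → ℕ}

lemma torusCell_mono {s : ∀ i, ZMod (p i)} {k k' : Fin ℓ → Bool}
    (h : ∀ i, k i = true → k' i = true) : torusCell p s k ⊆ torusCell p s k' := by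
  intro a ha
  apply mem_torusCell_iff.2
  intro i
  rcases mem_torusCell_iff.1 ha i with h' | ⟨hk, h'⟩
  · exact Or.inl h'
  · exact Or.inr ⟨h i hk, h'⟩

lemma torusRank_update_true {k : Fin ℓ → Bool} {i : Fin ℓ} (h : k i = false) :
    torusRank (Function.update k i true) = torusRank k + 1 := by
  unfold torusRank
  have heq : (Finset.univ.filter fun j => Function.update k i true j = true) =
      insert i (Finset.univ.filter fun j => k j = true) := by
    ext j
    simp only [Finset.mem_filter, Finset.mem_univ, true_and, Finset.mem_insert]
    by_cases hj : j = i
    · subst hj; simp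
    · rw [Function.update_of_ne hj]
      simp [hj]
  rw [heq, Finset.card_insert_of_notMem (by simp [h])]

lemma torusRank_kbot : torusRank (fun _ : Fin ℓ => false) = 0 := by
  simp [torusRank]

lemma reach_vtx (hp : ∀ i, 3 ≤ p i) (s : ∀ i, ZMod (p i)) :
    ∀ (n : ℕ) (k : Fin ℓ → Bool), torusRank k = n →
      ((torusPre p).hasse).Reachable
        ⟨torusCell p s (fun _ => false), ⟨s, fun _ => false, rfl⟩⟩
        ⟨torusCell p s k, ⟨s, k, rfl⟩⟩ := by
  intro n
  induction n with
  | zero =>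
    intro k hk
    have hkbot : k = fun _ => false := by
      funext i
      by_contra h
      have hi : k i = true := by
        cases hki : k i
        · exact absurd hki h
        · rfl
      have : i ∈ Finset.univ.filter fun j => k j = true := by simp [hi]
      have := Finset.card_pos.2 ⟨i, this⟩
      rw [show (Finset.univ.filter fun j => k j = true).card = torusRank k from rfl, hk] at this
      omega
    subst hkbot
    exact SimpleGraph.Reachable.refl _
  | succ n ih =>
    intro k hk
    have hex : ∃ i, k i = true := by
      by_contra h
      push_neg at h
      have : k = fun _ => false := funext fun i => by
        cases hki : k i
        · rfl
        · exact absurd hki (h i)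
      rw [this, torusRank_kbot] at hk
      omega
    obtain ⟨i, hi⟩ := hex
    set k₀ := Function.update k i false with hk₀
    have hup : Function.update k₀ i true = k := by
      funext j
      by_cases hj : j = i
      · subst hj; rw [Function.update_self, hi]
      · rw [Function.update_of_ne hj, hk₀, Function.update_of_ne hj]
    have hk₀i : k₀ i = false := by rw [hk₀, Function.update_self]
    have hrank : torusRank k = torusRank k₀ + 1 := by
      rw [← hup, torusRank_update_true hk₀i]
    have hmono : ∀ j, k₀ j = true → k j = true := by
      intro j hj
      by_cases hji : j = i
      · subst hji; rw [hk₀i] at hj; cases hj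
      · rw [hk₀, Function.update_of_ne hji] at hj; exact hj
    have hadj : ((torusPre p).hasse).Adj ⟨torusCell p s k₀, ⟨s, k₀, rfl⟩⟩
        ⟨torusCell p s k, ⟨s, k, rfl⟩⟩ := by
      apply Or.inl
      constructor
      · exact torusCell_mono hmono
      · rw [rk_torusCell hp, rk_torusCell hp, ← hrank]
    exact (ih k₀ (by omega)).trans hadj.reachable

lemma reach_vtx_bump (hp : ∀ i, 3 ≤ p i) (s : ∀ i, ZMod (p i)) (i : Fin ℓ) :
    ((torusPre p).hasse).Reachable
      ⟨torusCell p s (fun _ => false), ⟨s, fun _ => false, rfl⟩⟩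
      ⟨torusCell p (fun j => s j + if j = i then 1 else 0) (fun _ => false),
        ⟨_, fun _ => false, rfl⟩⟩ := by
  set ei : Fin ℓ → Bool := Function.update (fun _ => false) i true with hei
  have hrank : torusRank ei = 1 := by
    rw [hei, torusRank_update_true rfl, torusRank_kbot]
  have h1 : ((torusPre p).hasse).Adj
      ⟨torusCell p s (fun _ => false), ⟨s, fun _ => false, rfl⟩⟩
      ⟨torusCell p s ei, ⟨s, ei, rfl⟩⟩ := by
    apply Or.inl
    constructor
    · exact torusCell_mono (fun j hj => by cases hj)
    · rw [rk_torusCell hp, rk_torusCell hp, torusRank_kbot, hrank]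
  have h2 : ((torusPre p).hasse).Adj
      ⟨torusCell p (fun j => s j + if j = i then 1 else 0) (fun _ => false),
        ⟨_, fun _ => false, rfl⟩⟩
      ⟨torusCell p s ei, ⟨s, ei, rfl⟩⟩ := by
    apply Or.inl
    constructor
    · intro a ha
      apply mem_torusCell_iff.2
      intro j
      rcases mem_torusCell_iff.1 ha j with h' | ⟨hk, h'⟩
      · by_cases hj : j = i
        · subst hj
          refine Or.inr ⟨by rw [hei, Function.update_self], ?_⟩
          rw [h']; simp
        · refine Or.inl ?_
          rw [h']; simp [hj]
      · cases hk
    · rw [rk_torusCell hp, rk_torusCell hp, torusRank_kbot, hrank]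
  exact h1.reachable.trans h2.reachable.symm

lemma reach_vtx_add_nat (hp : ∀ i, 3 ≤ p i) (s : ∀ i, ZMod (p i)) (i : Fin ℓ) (n : ℕ) :
    ((torusPre p).hasse).Reachable
      ⟨torusCell p s (fun _ => false), ⟨s, fun _ => false, rfl⟩⟩
      ⟨torusCell p (fun j => s j + if j = i then (n : ZMod (p j)) else 0) (fun _ => false),
        ⟨_, fun _ => false, rfl⟩⟩ := by
  induction n with
  | zero =>
    have : (fun j => s j + if j = i then ((0 : ℕ) : ZMod (p j)) else 0) = s := by
      funext j; by_cases hj : j = i <;> simp [hj]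
    rw [show (⟨torusCell p (fun j => s j + if j = i then ((0 : ℕ) : ZMod (p j)) else 0)
        (fun _ => false), ⟨_, fun _ => false, rfl⟩⟩ :
        {x // x ∈ (torusPre p).cells}) =
      ⟨torusCell p s (fun _ => false), ⟨s, fun _ => false, rfl⟩⟩ from Subtype.ext (by rw [this])]
  | succ n ih =>
    have hstep := reach_vtx_bump hp
      (fun j => s j + if j = i then (n : ZMod (p j)) else 0) i
    have heq : (fun j => (s j + if j = i then (n : ZMod (p j)) else 0) +
        if j = i then 1 else 0) =
        (fun j => s j + if j = i then ((n + 1 : ℕ) : ZMod (p j)) else 0) := by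
      funext j
      by_cases hj : j = i
      · simp only [hj, if_pos rfl]
        push_cast
        ring
      · simp [hj]
    rw [show (⟨torusCell p (fun j => s j + if j = i then ((n + 1 : ℕ) : ZMod (p j)) else 0)
        (fun _ => false), ⟨_, fun _ => false, rfl⟩⟩ :
        {x // x ∈ (torusPre p).cells}) =
      ⟨torusCell p (fun j => (s j + if j = i then (n : ZMod (p j)) else 0) +
          if j = i then 1 else 0) (fun _ => false), ⟨_, fun _ => false, rfl⟩⟩ from
        Subtype.ext (by rw [heq])]
    exact ih.trans hstep

lemma reach_vtx_vtx (hp : ∀ i, 3 ≤ p i) (s s' : ∀ i, ZMod (p i)) :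
    ((torusPre p).hasse).Reachable
      ⟨torusCell p s (fun _ => false), ⟨s, fun _ => false, rfl⟩⟩
      ⟨torusCell p s' (fun _ => false), ⟨s', fun _ => false, rfl⟩⟩ := by
  haveI : ∀ i, NeZero (p i) := fun i => ⟨by have := hp i; omega⟩
  suffices h : ∀ A : Finset (Fin ℓ),
      ((torusPre p).hasse).Reachable
        ⟨torusCell p s (fun _ => false), ⟨s, fun _ => false, rfl⟩⟩
        ⟨torusCell p (fun j => if j ∈ A then s' j else s j) (fun _ => false),
          ⟨_, fun _ => false, rfl⟩⟩ by
    have := h Finset.univ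
    rw [show (fun j => if j ∈ Finset.univ then s' j else s j) = s' from
      funext fun j => by simp] at this
    exact this
  intro A
  induction A using Finset.induction_on with
  | empty =>
    rw [show (fun j => if j ∈ (∅ : Finset (Fin ℓ)) then s' j else s j) = s from
      funext fun j => by simp]
  | @insert i A hiA ih =>
    set b : ∀ j, ZMod (p j) := fun j => if j ∈ A then s' j else s j with hb
    have hbi : b i = s i := by rw [hb]; simp [hiA]
    have hstep := reach_vtx_add_nat hp b i ((s' i - s i).val)
    have heq : (fun j => b j + if j = i then (((s' i - s i).val : ℕ) : ZMod (p j)) else 0) =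
        (fun j => if j ∈ insert i A then s' j else s j) := by
      funext j
      by_cases hj : j = i
      · subst hj
        simp only [if_pos rfl, Finset.mem_insert, true_or, if_true, hbi]
        have : (((s' j - s j).val : ℕ) : ZMod (p j)) = s' j - s j := by
          simp [ZMod.natCast_val, ZMod.cast_id]
        rw [this]; ring
      · simp [hj, hb]
  
    rw [show (⟨torusCell p (fun j => if j ∈ insert i A then s' j else s j) (fun _ => false),
        ⟨_, fun _ => false, rfl⟩⟩ : {x // x ∈ (torusPre p).cells}) =
      ⟨torusCell p (fun j => b j + if j = i then (((s' i - s i).val : ℕ) : ZMod (p j)) else 0)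
        (fun _ => false), ⟨_, fun _ => false, rfl⟩⟩ from Subtype.ext (by rw [heq])]
    exact ih.trans hstep

lemma hasse_torus_connected (hp : ∀ i, 3 ≤ p i) : (torusPre p).hasse.Connected := by
  rw [SimpleGraph.connected_iff]
  constructor
  · intro a b
    obtain ⟨x, hx⟩ := a
    obtain ⟨y, hy⟩ := b
    obtain ⟨s, k, rfl⟩ := hx
    obtain ⟨s', k', rfl⟩ := hy
    have h1 := reach_vtx hp s (torusRank k) k rfl
    have h2 := reach_vtx_vtx hp s s'
    have h3 := reach_vtx hp s' (torusRank k') k' rfl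
    exact (h1.symm.trans h2).trans h3
  · exact ⟨⟨torusCell p (fun _ => 0) (fun _ => false), ⟨_, _, rfl⟩⟩⟩

end Connect

section Components
variable {ℓ : ℕ} {p₁ p₂ : Fin ℓ → ℕ}

/-- The graph homomorphism from the Hasse graph of the left summand into the
Hasse graph of a disjoint sum. -/
noncomputable def homL (X : PreCC (∀ i, ZMod (p₁ i))) (Y : PreCC (∀ i, ZMod (p₂ i)))
    (hX : ∀ x ∈ X.cells, x.Nonempty) :
    X.hasse →g (X.disjSum Y).hasse where
  toFun v := ⟨v.1.map Function.Embedding.inl, Set.mem_union_left _ ⟨v.1, v.2, rfl⟩⟩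
  map_rel' := by
    rintro v w (⟨hsub, hrk⟩ | ⟨hsub, hrk⟩)
    · exact Or.inl ⟨Finset.map_subset_map.2 hsub, by
        rw [rk_disjSum_inl v.2 (hX _ v.2), rk_disjSum_inl w.2 (hX _ w.2)]; exact hrk⟩
    · exact Or.inr ⟨Finset.map_subset_map.2 hsub, by
        rw [rk_disjSum_inl v.2 (hX _ v.2), rk_disjSum_inl w.2 (hX _ w.2)]; exact hrk⟩

noncomputable def homR (X : PreCC (∀ i, ZMod (p₁ i))) (Y : PreCC (∀ i, ZMod (p₂ i)))
    (hY : ∀ y ∈ Y.cells, y.Nonempty) :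
    Y.hasse →g (X.disjSum Y).hasse where
  toFun v := ⟨v.1.map Function.Embedding.inr, Set.mem_union_right _ ⟨v.1, v.2, rfl⟩⟩
  map_rel' := by
    rintro v w (⟨hsub, hrk⟩ | ⟨hsub, hrk⟩)
    · exact Or.inl ⟨Finset.map_subset_map.2 hsub, by
        rw [rk_disjSum_inr v.2 (hY _ v.2), rk_disjSum_inr w.2 (hY _ w.2)]; exact hrk⟩
    · exact Or.inr ⟨Finset.map_subset_map.2 hsub, by
        rw [rk_disjSum_inr v.2 (hY _ v.2), rk_disjSum_inr w.2 (hY _ w.2)]; exact hrk⟩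

lemma hasse_disj_two_components (hp₁ : ∀ i, 3 ≤ p₁ i) (hp₂ : ∀ i, 3 ≤ p₂ i) :
    Nat.card ((torusPre p₁).disjSum (torusPre p₂)).hasse.ConnectedComponent = 2 := by
  classical
  set X := torusPre p₁ with hX
  set Y := torusPre p₂ with hY
  have hXne : ∀ x ∈ X.cells, x.Nonempty := cells_torus_nonempty
  have hYne : ∀ y ∈ Y.cells, y.Nonempty := cells_torus_nonempty
  set Z := X.disjSum Y with hZ
  set f : {z // z ∈ Z.cells} → Bool := fun z => decide (∃ a, Sum.inl a ∈ z.1) with hf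
  have f_inl : ∀ (x : Finset (∀ i, ZMod (p₁ i))) (hx : x ∈ X.cells)
      (h : x.map Function.Embedding.inl ∈ Z.cells),
      f ⟨x.map Function.Embedding.inl, h⟩ = true := by
    intro x hx h
    obtain ⟨a, ha⟩ := hXne x hx
    simp only [hf, decide_eq_true_iff]
    exact ⟨a, Finset.mem_map_of_mem _ ha⟩
  have f_inr : ∀ (y : Finset (∀ i, ZMod (p₂ i)))
      (h : y.map Function.Embedding.inr ∈ Z.cells),
      f ⟨y.map Function.Embedding.inr, h⟩ = false := by
    intro y h
    simp only [hf, decide_eq_false_iff_not]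
    rintro ⟨a, ha⟩
    simp [Finset.mem_map] at ha
  have key : ∀ v w : {z // z ∈ Z.cells}, v.1 ⊆ w.1 → f v = f w := by
    rintro ⟨v, hv⟩ ⟨w, hw⟩ hsub
    rcases mem_cells_disjSum.1 hw with ⟨w₀, hw₀, rfl⟩ | ⟨w₀, hw₀, rfl⟩
    · obtain ⟨v₀, hv₀, hev⟩ := left_of_subset_inl hv (disjSum_cell_nonempty hXne hYne hv) hsub
      subst hev
      rw [f_inl v₀ hv₀, f_inl w₀ hw₀]
    · obtain ⟨v₀, hv₀, hev⟩ := right_of_subset_inr hv (disjSum_cell_nonempty hXne hYne hv) hsub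
      subst hev
      rw [f_inr v₀, f_inr w₀]
  have hconst : ∀ v w : {z // z ∈ Z.cells}, Z.hasse.Adj v w → f v = f w := by
    rintro v w (⟨hsub, -⟩ | ⟨hsub, -⟩)
    · exact key v w hsub
    · exact (key w v hsub).symm
  have hwalk : ∀ (v w : {z // z ∈ Z.cells}), Z.hasse.Walk v w → f v = f w := by
    intro v w pw
    induction pw with
    | nil => rfl
    | cons h' _ ih => exact (hconst _ _ h').trans ih
  set F : Z.hasse.ConnectedComponent → Bool :=
    SimpleGraph.ConnectedComponent.lift f (fun v w pw _ => hwalk v w pw) with hF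
  have hFmk : ∀ v, F (Z.hasse.connectedComponentMk v) = f v := fun v => rfl
  -- base vertices
  set x₀ : Finset (∀ i, ZMod (p₁ i)) := torusCell p₁ (fun _ => 0) (fun _ => false) with hx₀
  set y₀ : Finset (∀ i, ZMod (p₂ i)) := torusCell p₂ (fun _ => 0) (fun _ => false) with hy₀
  have hx₀c : x₀ ∈ X.cells := ⟨_, _, rfl⟩
  have hy₀c : y₀ ∈ Y.cells := ⟨_, _, rfl⟩
  set vL : {z // z ∈ Z.cells} :=
    ⟨x₀.map Function.Embedding.inl, Set.mem_union_left _ ⟨x₀, hx₀c, rfl⟩⟩ with hvL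
  set vR : {z // z ∈ Z.cells} :=
    ⟨y₀.map Function.Embedding.inr, Set.mem_union_right _ ⟨y₀, hy₀c, rfl⟩⟩ with hvR
  have hFinj : Function.Injective F := by
    refine SimpleGraph.ConnectedComponent.ind₂ ?_
    intro v w hvw
    rw [hFmk, hFmk] at hvw
    apply SimpleGraph.ConnectedComponent.sound
    obtain ⟨v, hv⟩ := v
    obtain ⟨w, hw⟩ := w
    rcases mem_cells_disjSum.1 hv with ⟨a, ha, rfl⟩ | ⟨a, ha, rfl⟩ <;>
      rcases mem_cells_disjSum.1 hw with ⟨b, hb, rfl⟩ | ⟨b, hb, rfl⟩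
    · -- both left
      have hreach : X.hasse.Reachable ⟨a, ha⟩ ⟨b, hb⟩ :=
        (hasse_torus_connected hp₁).preconnected _ _
      exact hreach.map (homL X Y hXne)
    · exfalso
      rw [f_inl a ha, f_inr b] at hvw
      exact Bool.noConfusion hvw
    · exfalso
      rw [f_inr a, f_inl b hb] at hvw
      exact Bool.noConfusion hvw
    · have hreach : Y.hasse.Reachable ⟨a, ha⟩ ⟨b, hb⟩ :=
        (hasse_torus_connected hp₂).preconnected _ _
      exact hreach.map (homR X Y hYne)
  have hFsurj : Function.Surjective F := by
    intro b
    cases b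
    · exact ⟨Z.hasse.connectedComponentMk vR, by rw [hFmk]; exact f_inr y₀ _⟩
    · exact ⟨Z.hasse.connectedComponentMk vL, by rw [hFmk]; exact f_inl x₀ hx₀c _⟩
  have e : Z.hasse.ConnectedComponent ≃ Bool := Equiv.ofBijective F ⟨hFinj, hFsurj⟩
  rw [Nat.card_congr e]
  simp [Nat.card_eq_fintype_card]

end Components


/-- Let `T = T_{p₁,…,p_ℓ}` and let `T'` be the disjoint union of the tori
`T_{p¹₁,…,p¹_ℓ}` and `T_{p²₁,…,p²_ℓ}`.  If `p₁⋯p_ℓ = p¹₁⋯p¹_ℓ + p²₁⋯p²_ℓ` and all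
cycle lengths are at least `3`, then every HOMP model assigns `T` and `T'` the
same output, even though the Hasse graph of `T` is connected while the Hasse
graph of `T'` has exactly two connected components. -/
theorem torus_vs_disjoint_tori {ℓ : ℕ} (p p₁ p₂ : Fin ℓ → ℕ)
    (hp : ∀ j, 3 ≤ p j) (hp₁ : ∀ j, 3 ≤ p₁ j) (hp₂ : ∀ j, 3 ≤ p₂ j)
    (hcard : ∏ i, p i = ∏ i, p₁ i + ∏ i, p₂ i) :
    (∀ {D : Type} {ℓ' : ℕ} (M : HOMP D ℓ'),
      M.out (torusPre p) = M.out ((torusPre p₁).disjSum (torusPre p₂))) ∧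
    (torusPre p).hasse.Connected ∧
    Nat.card ((torusPre p₁).disjSum (torusPre p₂)).hasse.ConnectedComponent = 2 := by
  refine ⟨?_, hasse_torus_connected hp, hasse_disj_two_components hp₁ hp₂⟩
  intro D ℓ' M
  have hfinT := cells_torus_finite hp
  have hfin1 := cells_torus_finite hp₁
  have hfin2 := cells_torus_finite hp₂
  have hfinT' := cells_disjSum_finite hfin1 hfin2
  have h1 : ∀ x ∈ (torusPre p).cells,
      M.feat (torusPre p) M.T x = ff M ℓ M.T ((torusPre p).rk x) := by
    rintro x ⟨s, k, rfl⟩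
    rw [feat_torus hp M M.T s k, rk_torusCell hp]
  have h2 : ∀ x ∈ ((torusPre p₁).disjSum (torusPre p₂)).cells,
      M.feat ((torusPre p₁).disjSum (torusPre p₂)) M.T x =
        ff M ℓ M.T (((torusPre p₁).disjSum (torusPre p₂)).rk x) := by
    intro x hx
    rcases mem_cells_disjSum.1 hx with ⟨x₀, hx₀, rfl⟩ | ⟨y₀, hy₀, rfl⟩
    · obtain ⟨s, k, rfl⟩ := hx₀
      rw [(feat_disj hp₁ hp₂ M M.T).1 s k,
        rk_disjSum_inl (show torusCell p₁ s k ∈ (torusPre p₁).cells from ⟨s, k, rfl⟩) (torusCell_nonempty s k), rk_torusCell hp₁]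
    · obtain ⟨s, k, rfl⟩ := hy₀
      rw [(feat_disj hp₁ hp₂ M M.T).2 s k,
        rk_disjSum_inr (show torusCell p₂ s k ∈ (torusPre p₂).cells from ⟨s, k, rfl⟩) (torusCell_nonempty s k), rk_torusCell hp₂]
  rw [out_eq_of_feat M (torusPre p) hfinT (ff M ℓ M.T) h1,
      out_eq_of_feat M ((torusPre p₁).disjSum (torusPre p₂)) hfinT' (ff M ℓ M.T) h2]
  congr 2
  refine Multiset.ext.2 fun r => ?_
  rw [count_map_rk hfinT, count_map_rk hfinT',
    ncard_skel_torus hp,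
    ncard_skel_disjSum cells_torus_nonempty cells_torus_nonempty hfin1 hfin2,
    ncard_skel_torus hp₁, ncard_skel_torus hp₂, hcard]
  ring

end TDL
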